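/- arXiv:math/0107140 — 4 statements merged into one kernel-verified Lean document; each statement's English description precedes it below -/
import Mathlib

section
/- For each n ≥ 2 there exist constants c, C > 0 depending only on n and d such that for any vertices x_1,...,x_n in Z^d, c·∏_{i=1}^{n-1} ρ(x_i, {x_{i+1},...,x_n}) ≤ ⟨x_1...x_n⟩ ≤ C·∏_{i=1}^{n-1} ρ(x_i, {x_{i+1},...,x_n}). -/
open MeasureTheory ProbabilityTheory Finset

set_option maxHeartbeats 1000000

abbrev Zd (d : ℕ) := Fin d → ℤ

noncomputable def br {d : ℕ} (x y : Zd d) : ℝ := 1 + ∑ i, |(x i : ℝ) - y i|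

lemma br_symm {d : ℕ} (x y : Zd d) : br x y = br y x := by
  simp [br, abs_sub_comm]

noncomputable def spread {d : ℕ} (W : Finset (Zd d)) : ℝ :=
  sInf {p | ∃ E : Finset (Sym2 {x // x ∈ W}),
    (SimpleGraph.fromEdgeSet (↑E : Set (Sym2 {x // x ∈ W}))).IsTree ∧ (∀ e ∈ E, ¬ e.IsDiag) ∧
    p = ∏ e ∈ E, Sym2.lift ⟨fun u v => br u.1 v.1, fun u v => br_symm u.1 v.1⟩ e}

noncomputable def rho {d : ℕ} (V W : Finset (Zd d)) : ℝ :=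
  sInf {p | ∃ v ∈ V, ∃ w ∈ W, p = br v w}

abbrev RRel (d : ℕ) := Zd d × Zd d → Prop

def HasStochDim {Ω : Type*} [MeasurableSpace Ω] {d : ℕ} (P : Measure Ω)
    (R : Ω → RRel d) (δ : ℝ) : Prop :=
  0 < δ ∧ δ ≤ d ∧ ∃ C : ℝ, 0 < C ∧ ∀ x z y w : Zd d,
    br x z ^ (δ - d) ≤ C * (P {ω | R ω (x, z)}).toReal ∧
    (P {ω | R ω (x, z) ∧ R ω (y, w)}).toReal ≤
      C * br x z ^ (δ - d) * br y w ^ (δ - d) + C * spread {x, z, y, w} ^ (δ - d)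

def relComp {Ω : Type*} {d : ℕ} (L R : Ω → RRel d) : Ω → RRel d :=
  fun ω p => ∃ y, L ω (p.1, y) ∧ R ω (y, p.2)

def relRComp {Ω : Type*} {d : ℕ} (L R : Ω → RRel d) : Ω → RRel d :=
  fun ω p => ∃ y, L ω (p.1, y) ∧ R ω (y, p.2) ∧ br p.1 p.2 ≤ min (br p.1 y) (br y p.2)

def leftTail {Ω : Type*} [MeasurableSpace Ω] {d : ℕ} (R : Ω → RRel d) (v : Zd d) :
    MeasurableSpace Ω :=
  ⨅ K : Finset (Zd d), MeasurableSpace.generateFrom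
    {A | ∃ y : Zd d, y ∉ K ∧ A = {ω | R ω (v, y)}}

def rightTail {Ω : Type*} [MeasurableSpace Ω] {d : ℕ} (R : Ω → RRel d) (v : Zd d) :
    MeasurableSpace Ω :=
  ⨅ K : Finset (Zd d), MeasurableSpace.generateFrom
    {A | ∃ y : Zd d, y ∉ K ∧ A = {ω | R ω (y, v)}}

def remoteTail {Ω : Type*} [MeasurableSpace Ω] {d : ℕ} (R : Ω → RRel d) :
    MeasurableSpace Ω :=
  ⨅ (K₁ : Finset (Zd d)) (K₂ : Finset (Zd d)), MeasurableSpace.generateFrom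
    {A | ∃ x y : Zd d, x ∉ K₁ ∧ y ∉ K₂ ∧ A = {ω | R ω (x, y)}}

def TrivialField {Ω : Type*} [MeasurableSpace Ω] (P : Measure Ω)
    (m : MeasurableSpace Ω) : Prop :=
  ∀ A : Set Ω, MeasurableSet[m] A → P A = 0 ∨ P A = 1

def IsSRW {Ω : Type*} [MeasurableSpace Ω] {d : ℕ} (P : Measure Ω) (x : Zd d)
    (X : ℕ → Ω → Zd d) : Prop :=
  ∀ (n : ℕ) (a : ℕ → Zd d),
    (P {ω | ∀ i ≤ n, X i ω = a i}).toReal =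
      if a 0 = x ∧ ∀ i < n, (∑ j, |a (i + 1) j - a i j|) = 1 then (1 / (2 * d) : ℝ) ^ n else 0



section Dev

variable {d : ℕ}

lemma one_le_br (x y : Zd d) : 1 ≤ br x y := by
  have : (0:ℝ) ≤ ∑ i, |(x i : ℝ) - y i| := Finset.sum_nonneg fun i _ => abs_nonneg _
  simp [br]; linarith

lemma br_nonneg (x y : Zd d) : 0 ≤ br x y := le_trans zero_le_one (one_le_br x y)

lemma br_self (x : Zd d) : br x x = 1 := by simp [br]

lemma br_triangle (x y z : Zd d) : br x z ≤ br x y + br y z - 1 := by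
  have h : ∑ i, |(x i : ℝ) - z i| ≤ ∑ i, |(x i : ℝ) - y i| + ∑ i, |(y i : ℝ) - z i| := by
    rw [← Finset.sum_add_distrib]
    exact Finset.sum_le_sum fun i _ => abs_sub_le _ _ _
  simp only [br]; linarith

-- rho with singleton source: equals min' of image
lemma rho_singleton_eq_min' (v : Zd d) (W : Finset (Zd d)) (hW : W.Nonempty) :
    rho {v} W = (W.image (fun w => br v w)).min' (hW.image _) := by
  have hset : {p | ∃ v' ∈ ({v} : Finset (Zd d)), ∃ w ∈ W, p = br v' w}
      = ↑(W.image (fun w => br v w)) := by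
    ext p
    simp only [Set.mem_setOf_eq, Finset.coe_image, Set.mem_image, Finset.mem_coe,
      Finset.mem_singleton]
    constructor
    · rintro ⟨v', rfl, w, hw, rfl⟩; exact ⟨w, hw, rfl⟩
    · rintro ⟨w, hw, rfl⟩; exact ⟨v, rfl, w, hw, rfl⟩
  rw [rho, hset, Finset.Nonempty.csInf_eq_min']

lemma rho_le_br {v w : Zd d} {W : Finset (Zd d)} (hw : w ∈ W) : rho {v} W ≤ br v w := by
  rw [rho_singleton_eq_min' v W ⟨w, hw⟩]
  exact Finset.min'_le _ _ (Finset.mem_image_of_mem _ hw)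

lemma exists_rho_eq (v : Zd d) {W : Finset (Zd d)} (hW : W.Nonempty) :
    ∃ w ∈ W, rho {v} W = br v w := by
  rw [rho_singleton_eq_min' v W hW]
  have := Finset.min'_mem (W.image (fun w => br v w)) ((hW.image _))
  rw [Finset.mem_image] at this
  obtain ⟨w, hw, h⟩ := this
  exact ⟨w, hw, h.symm⟩

lemma one_le_rho (v : Zd d) {W : Finset (Zd d)} (hW : W.Nonempty) : 1 ≤ rho {v} W := by
  obtain ⟨w, _, h⟩ := exists_rho_eq v hW
  rw [h]; exact one_le_br _ _

lemma rho_nonneg (V W : Finset (Zd d)) : 0 ≤ rho V W := by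
  apply Real.sInf_nonneg
  rintro p ⟨v, _, w, _, rfl⟩
  exact br_nonneg v w

lemma rho_eq_one_of_mem {v : Zd d} {W : Finset (Zd d)} (hv : v ∈ W) : rho {v} W = 1 := by
  have h1 : rho {v} W ≤ 1 := by simpa [br_self] using rho_le_br (v := v) hv
  exact le_antisymm h1 (one_le_rho v ⟨v, hv⟩)

lemma rho_triangle (a b : Zd d) {S : Finset (Zd d)} (hS : S.Nonempty) :
    rho {b} S ≤ br b a + rho {a} S - 1 := by
  obtain ⟨w, hw, h⟩ := exists_rho_eq a hS
  calc rho {b} S ≤ br b w := rho_le_br hw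
    _ ≤ br b a + br a w - 1 := br_triangle b a w
    _ = br b a + rho {a} S - 1 := by rw [h]

lemma rho_insert (v a : Zd d) {S : Finset (Zd d)} (hS : S.Nonempty) :
    rho {v} (insert a S) = min (br v a) (rho {v} S) := by
  apply le_antisymm
  · apply le_min
    · exact rho_le_br (Finset.mem_insert_self a S)
    · obtain ⟨w, hw, h⟩ := exists_rho_eq v hS
      rw [h]; exact rho_le_br (Finset.mem_insert_of_mem hw)
  · obtain ⟨w, hw, h⟩ := exists_rho_eq v (Finset.insert_nonempty a S)
    rw [h]
    rcases Finset.mem_insert.mp hw with h' | h'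
    · subst h'; exact min_le_left _ _
    · exact le_trans (min_le_right _ _) (rho_le_br h')

noncomputable def Plist {d : ℕ} : List (Zd d) → ℝ
  | [] => 1
  | [_] => 1
  | a :: b :: l => rho {a} (b :: l).toFinset * Plist (b :: l)

@[simp] lemma Plist_nil : Plist ([] : List (Zd d)) = 1 := rfl
@[simp] lemma Plist_single (a : Zd d) : Plist [a] = 1 := rfl

lemma Plist_cons (a : Zd d) {l : List (Zd d)} (hl : l ≠ []) :
    Plist (a :: l) = rho {a} l.toFinset * Plist l := by
  cases l with
  | nil => exact absurd rfl hl
  | cons b t => rfl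

lemma Plist_nonneg (l : List (Zd d)) : 0 ≤ Plist l := by
  induction l with
  | nil => norm_num
  | cons a t ih =>
    cases t with
    | nil => norm_num
    | cons b s => exact mul_nonneg (rho_nonneg _ _) ih

-- the numeric core of the swap inequality
lemma swap_core {t α β : ℝ} (ht : 1 ≤ t) (hα : 1 ≤ α) (hβ : 1 ≤ β)
    (h1 : β ≤ t + α - 1) (h2 : α ≤ t + β - 1) :
    min t β * α ≤ 2 * (min t α * β) := by
  rcases le_total t β with hb | hb <;> rcases le_total t α with ha | ha
  · rw [min_eq_left hb, min_eq_left ha]; nlinarith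
  · rw [min_eq_left hb, min_eq_right ha]; nlinarith
  · rw [min_eq_right hb, min_eq_left ha]; nlinarith
  · rw [min_eq_right hb, min_eq_right ha]; nlinarith

lemma rho_swap (a b : Zd d) {S : Finset (Zd d)} (hS : S.Nonempty) :
    rho {b} (insert a S) * rho {a} S ≤ 2 * (rho {a} (insert b S) * rho {b} S) := by
  rw [rho_insert b a hS, rho_insert a b hS, br_symm b a]
  refine swap_core (one_le_br a b) (one_le_rho a hS) (one_le_rho b hS) ?_ (rho_triangle b a hS)
  have h := rho_triangle a b hS
  rwa [br_symm b a] at h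

lemma Plist_swap (a b : Zd d) (l : List (Zd d)) :
    Plist (b :: a :: l) ≤ 2 * Plist (a :: b :: l) := by
  cases l with
  | nil =>
    show (rho {b} {a} : ℝ) * 1 ≤ 2 * (rho {a} {b} * 1)
    have h1 : rho {b} ({a} : Finset (Zd d)) = br b a := by
      obtain ⟨w, hw, h⟩ := exists_rho_eq b (Finset.singleton_nonempty a)
      rw [Finset.mem_singleton] at hw; subst hw; exact h
    have h2 : rho {a} ({b} : Finset (Zd d)) = br a b := by
      obtain ⟨w, hw, h⟩ := exists_rho_eq a (Finset.singleton_nonempty b)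
      rw [Finset.mem_singleton] at hw; subst hw; exact h
    rw [h1, h2, br_symm b a]
    nlinarith [br_nonneg a b]
  | cons c t =>
    have hne : (c :: t : List (Zd d)) ≠ [] := by simp
    have hfs : (c :: t : List (Zd d)).toFinset.Nonempty := ⟨c, by simp⟩
    rw [Plist_cons b (by simp), Plist_cons a hne, Plist_cons a (by simp), Plist_cons b hne]
    have e1 : (a :: c :: t : List (Zd d)).toFinset = insert a (c :: t).toFinset := by simp
    have e2 : (b :: c :: t : List (Zd d)).toFinset = insert b (c :: t).toFinset := by simp
    rw [e1, e2, ← mul_assoc, ← mul_assoc]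
    have := rho_swap a b hfs
    have hP := Plist_nonneg (c :: t : List (Zd d))
    nlinarith [this, hP]

lemma Plist_move_to_front {a : Zd d} : ∀ {L : List (Zd d)}, L.Nodup → a ∈ L →
    Plist L ≤ 2 ^ L.length * Plist (a :: L.erase a) := by
  intro L
  induction L with
  | nil => intro _ h; simp at h
  | cons b T ih =>
    intro hnd hmem
    rcases List.mem_cons.mp hmem with rfl | haT
    · rw [List.erase_cons_head]
      have := Plist_nonneg (a :: T)
      have h2 : (1:ℝ) ≤ 2 ^ (a :: T).length := by simpa using pow_le_pow_right₀ (by norm_num : (1:ℝ) ≤ 2) (Nat.zero_le _)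
      nlinarith
    · have hab : a ≠ b := by rintro rfl; exact (List.nodup_cons.mp hnd).1 haT
      have hTnd : T.Nodup := (List.nodup_cons.mp hnd).2
      have hTne : T ≠ [] := by rintro rfl; simp at haT
      rw [List.erase_cons_tail (by simpa using hab.symm)]
      -- Plist (b :: T) = rho b T.toFinset * Plist T
      rw [Plist_cons b hTne]
      have hTe : a :: T.erase a ≠ [] := by simp
      have step1 : Plist T ≤ 2 ^ T.length * Plist (a :: T.erase a) := ih hTnd haT
      have hrho : (0:ℝ) ≤ rho {b} T.toFinset := rho_nonneg _ _
      have step2 : rho {b} T.toFinset * Plist T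
          ≤ 2 ^ T.length * (rho {b} T.toFinset * Plist (a :: T.erase a)) := by
        have := mul_le_mul_of_nonneg_left step1 hrho
        nlinarith [this]
      -- rho b T.toFinset * Plist (a :: T.erase a) = Plist (b :: a :: T.erase a)
      have hfseq : T.toFinset = (a :: T.erase a).toFinset := by
        ext z; simp only [List.toFinset_cons, Finset.mem_insert, List.mem_toFinset]
        constructor
        · intro hz
          rcases eq_or_ne z a with rfl | hza
          · exact Or.inl rfl
          · exact Or.inr ((List.mem_erase_of_ne hza).mpr hz)
        · rintro (rfl | hz)
          · exact haT
          · exact List.mem_of_mem_erase hz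
      have key : rho {b} T.toFinset * Plist (a :: T.erase a) = Plist (b :: a :: T.erase a) := by
        rw [Plist_cons b hTe, hfseq]
      rw [key] at step2
      have step3 : Plist (b :: a :: T.erase a) ≤ 2 * Plist (a :: b :: T.erase a) :=
        Plist_swap a b _
      have hfin : Plist (a :: b :: T.erase a) = Plist (a :: (b :: T).erase a) := by
        rw [List.erase_cons_tail (by simpa using hab.symm)]
      calc rho {b} T.toFinset * Plist T ≤ 2 ^ T.length * Plist (b :: a :: T.erase a) := step2
        _ ≤ 2 ^ T.length * (2 * Plist (a :: b :: T.erase a)) := by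
            have h2 : (0:ℝ) ≤ 2 ^ T.length := by positivity
            exact mul_le_mul_of_nonneg_left step3 h2
        _ = 2 ^ (T.length + 1) * Plist (a :: b :: T.erase a) := by rw [pow_succ]; ring
        _ = 2 ^ (b :: T).length * Plist (a :: b :: T.erase a) := by
            rw [List.length_cons]

lemma Plist_perm : ∀ (m : ℕ) {L₁ L₂ : List (Zd d)}, L₁.length = m → L₁.Perm L₂ → L₁.Nodup →
    Plist L₁ ≤ 2 ^ (m * m) * Plist L₂ := by
  intro m
  induction m using Nat.strong_induction_on with
  | _ m ih =>
    intro L₁ L₂ hlen hperm hnd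
    cases L₂ with
    | nil =>
      have h0 : L₁ = [] := List.Perm.eq_nil hperm
      subst h0
      have hm0 : m = 0 := by simpa using hlen.symm
      subst hm0; simp
    | cons a T₂ =>
      have ha1 : a ∈ L₁ := hperm.mem_iff.mpr (by simp)
      have hm : 1 ≤ m := by
        rw [← hlen]; exact List.length_pos_iff.mpr (by rintro rfl; simp at ha1)
      have step1 : Plist L₁ ≤ 2 ^ L₁.length * Plist (a :: L₁.erase a) :=
        Plist_move_to_front hnd ha1
      have hpermE : (L₁.erase a).Perm T₂ := by
        have h1 : (a :: L₁.erase a).Perm (a :: T₂) :=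
          (List.perm_cons_erase ha1).symm.trans hperm
        exact h1.cons_inv
      have hndE : (L₁.erase a).Nodup := hnd.erase a
      have hlenE : (L₁.erase a).length = m - 1 := by
        rw [List.length_erase_of_mem ha1, hlen]
      have ihE : Plist (L₁.erase a) ≤ 2 ^ ((m-1) * (m-1)) * Plist T₂ :=
        ih (m-1) (by omega) hlenE hpermE hndE
      -- combine
      cases hE : L₁.erase a with
      | nil =>
        have hT₂ : T₂ = [] := ((hE ▸ hpermE : ([] : List (Zd d)).Perm T₂).symm).eq_nil
        subst hT₂
        rw [hE] at step1
        have h1 : Plist L₁ ≤ 2 ^ m := by simpa [hlen] using step1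
        have h2 : (2:ℝ) ^ m ≤ 2 ^ (m * m) :=
          pow_le_pow_right₀ (by norm_num) (by nlinarith)
        simpa using le_trans h1 h2
      | cons b S =>
        have hTne : L₁.erase a ≠ [] := by rw [hE]; simp
        have hT₂ne : T₂ ≠ [] := by
          rintro rfl; rw [List.Perm.eq_nil hpermE] at hE; simp at hE
        rw [← hE] at *
        have e1 : Plist (a :: L₁.erase a) = rho {a} (L₁.erase a).toFinset * Plist (L₁.erase a) :=
          Plist_cons a hTne
        have e2 : Plist (a :: T₂) = rho {a} T₂.toFinset * Plist T₂ := Plist_cons a hT₂ne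
        have hfs : (L₁.erase a).toFinset = T₂.toFinset := List.toFinset_eq_of_perm _ _ hpermE
        have hrho : (0:ℝ) ≤ rho {a} T₂.toFinset := rho_nonneg _ _
        have step2 : Plist (a :: L₁.erase a) ≤ 2 ^ ((m-1)*(m-1)) * Plist (a :: T₂) := by
          rw [e1, e2, hfs]
          calc rho {a} T₂.toFinset * Plist (L₁.erase a)
              ≤ rho {a} T₂.toFinset * (2 ^ ((m-1) * (m-1)) * Plist T₂) :=
                mul_le_mul_of_nonneg_left ihE hrho
            _ = 2 ^ ((m-1)*(m-1)) * (rho {a} T₂.toFinset * Plist T₂) := by ring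
        calc Plist L₁ ≤ 2 ^ L₁.length * Plist (a :: L₁.erase a) := step1
          _ ≤ 2 ^ m * (2 ^ ((m-1)*(m-1)) * Plist (a :: T₂)) := by
              rw [hlen]
              exact mul_le_mul_of_nonneg_left step2 (by positivity)
          _ = 2 ^ (m + (m-1)*(m-1)) * Plist (a :: T₂) := by rw [pow_add]; ring
          _ ≤ 2 ^ (m * m) * Plist (a :: T₂) := by
              have hple : m + (m-1)*(m-1) ≤ m * m := by
                cases m with
                | zero => omega
                | succ k => simp [Nat.succ_sub_one]; nlinarith
              have hP : 0 ≤ Plist (a :: T₂) := Plist_nonneg _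
              have : (2:ℝ) ^ (m + (m-1)*(m-1)) ≤ 2 ^ (m*m) :=
                pow_le_pow_right₀ (by norm_num) hple
              nlinarith

noncomputable def Qprod {d : ℕ} (x : ℕ → Zd d) (n : ℕ) : ℝ :=
  ∏ i ∈ Finset.range (n - 1), rho {x i} ((Finset.Icc (i + 1) (n - 1)).image x)

lemma image_range_succ_eq (x : ℕ → Zd d) (k : ℕ) :
    (Finset.range (k + 2)).image x
      = insert (x 0) ((Finset.range (k + 1)).image (fun i => x (i + 1))) := by
  ext z
  simp only [Finset.mem_image, Finset.mem_insert, Finset.mem_range]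
  constructor
  · rintro ⟨j, hj, rfl⟩
    rcases j with _ | i
    · exact Or.inl rfl
    · exact Or.inr ⟨i, by omega, rfl⟩
  · rintro (rfl | ⟨i, hi, rfl⟩)
    · exact ⟨0, by omega, rfl⟩
    · exact ⟨i + 1, by omega, rfl⟩

lemma image_Icc_shift (x : ℕ → Zd d) (a b : ℕ) :
    (Finset.Icc (a + 1) (b + 1)).image x = (Finset.Icc a b).image (fun i => x (i + 1)) := by
  ext z
  simp only [Finset.mem_image, Finset.mem_Icc]
  constructor
  · rintro ⟨j, hj, rfl⟩
    exact ⟨j - 1, by omega, by rw [Nat.sub_add_cancel (by omega)]⟩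
  · rintro ⟨i, hi, rfl⟩
    exact ⟨i + 1, by omega, rfl⟩

lemma Qprod_succ (x : ℕ → Zd d) (k : ℕ) :
    Qprod x (k + 2) = rho {x 0} ((Finset.range (k + 1)).image (fun i => x (i + 1)))
      * Qprod (fun i => x (i + 1)) (k + 1) := by
  show (∏ i ∈ Finset.range (k + 1), rho {x i} ((Finset.Icc (i + 1) (k + 1)).image x)) = _
  rw [Finset.prod_range_succ']
  have h0 : (Finset.Icc 1 (k + 1)).image x
      = (Finset.range (k + 1)).image (fun i => x (i + 1)) := by
    ext z
    simp only [Finset.mem_image, Finset.mem_Icc, Finset.mem_range]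
    constructor
    · rintro ⟨j, hj, rfl⟩
      exact ⟨j - 1, by omega, by rw [Nat.sub_add_cancel (by omega)]⟩
    · rintro ⟨i, hi, rfl⟩
      exact ⟨i + 1, by omega, rfl⟩
  have h1 : ∀ i, (Finset.Icc (i + 1 + 1) (k + 1)).image x
      = (Finset.Icc (i + 1) k).image (fun j => x (j + 1)) := by
    intro i
    have := image_Icc_shift x (i + 1) k
    simpa using this
  rw [h0]
  rw [mul_comm]
  congr 1
  show _ = Qprod (fun i => x (i + 1)) (k + 1)
  unfold Qprod
  simp only [Nat.add_sub_cancel]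
  apply Finset.prod_congr rfl
  intro i _
  rw [h1 i]

lemma exists_good_list (x : ℕ → Zd d) :
    ∀ (n : ℕ), 1 ≤ n → ∃ L : List (Zd d), L.Nodup ∧ L ≠ [] ∧
      L.toFinset = (Finset.range n).image x ∧ Plist L = Qprod x n := by
  intro n
  induction n generalizing x with
  | zero => omega
  | succ k ih =>
    intro _
    rcases Nat.eq_or_lt_of_le (Nat.one_le_iff_ne_zero.mpr (Nat.succ_ne_zero k)) with h1 | h1
    · -- k = 0 : n = 1
      have hk : k = 0 := by omega
      subst hk
      refine ⟨[x 0], by simp, by simp, ?_, ?_⟩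
      · ext z; simp [Finset.range_one]
      · simp [Qprod]
    · -- k ≥ 1
      have hk : 1 ≤ k := by omega
      obtain ⟨k', rfl⟩ : ∃ k', k = k' + 1 := ⟨k - 1, by omega⟩
      obtain ⟨L', hnd, hne, hfs, hP⟩ := ih (fun i => x (i + 1)) hk
      set W' := (Finset.range (k' + 1)).image (fun i => x (i + 1)) with hW'
      have hQ : Qprod x (k' + 2) = rho {x 0} W' * Qprod (fun i => x (i + 1)) (k' + 1) :=
        Qprod_succ x k'
      by_cases hx0 : x 0 ∈ W'
      · refine ⟨L', hnd, hne, ?_, ?_⟩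
        · rw [hfs, image_range_succ_eq, ← hW', Finset.insert_eq_self.mpr hx0]
        · rw [hP, hQ, rho_eq_one_of_mem hx0, one_mul]
      · refine ⟨x 0 :: L', ?_, by simp, ?_, ?_⟩
        · rw [List.nodup_cons]
          exact ⟨fun h => hx0 (by rw [← hfs]; exact List.mem_toFinset.mpr h), hnd⟩
        · rw [List.toFinset_cons, hfs, image_range_succ_eq, hW']
        · rw [Plist_cons _ hne, hfs, hP, hQ, hW']

open SimpleGraph

noncomputable def brE {d : ℕ} : Sym2 (Zd d) → ℝ := Sym2.lift ⟨br, br_symm⟩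

lemma one_le_brE (e : Sym2 (Zd d)) : 1 ≤ brE e := by
  induction e using Sym2.ind with
  | _ x y => exact one_le_br x y

lemma brE_nonneg (e : Sym2 (Zd d)) : 0 ≤ brE e := le_trans zero_le_one (one_le_brE e)

lemma brE_mk (x y : Zd d) : brE s(x, y) = br x y := rfl

lemma adj_of_head {V : Type*} {s : Set (Sym2 V)} {v w y : V} (hvw : v ≠ w)
    (hv : ∀ e ∈ s, v ∉ e) (hadj : (fromEdgeSet (insert s(v, w) s)).Adj v y) : y = w := by
  rw [fromEdgeSet_adj] at hadj
  obtain ⟨hmem, hne⟩ := hadj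
  rcases Set.mem_insert_iff.mp hmem with he | he
  · rcases Sym2.eq_iff.mp he with ⟨_, h⟩ | ⟨h, _⟩
    · exact h
    · exact absurd h hvw
  · exact absurd (Sym2.mem_mk_left v y) (hv _ he)

-- pendant extension of an acyclic graph stays acyclic
lemma acyclic_insert_pendant {V : Type*} (s : Set (Sym2 V)) (v w : V) (hvw : v ≠ w)
    (hacy : (fromEdgeSet s).IsAcyclic) (hv : ∀ e ∈ s, v ∉ e) :
    (fromEdgeSet (insert s(v, w) s)).IsAcyclic := by
  classical
  intro u c hc
  by_cases hvc : v ∈ c.support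
  · have hc' : (c.rotate _ hvc).IsCycle := hc.rotate hvc
    set c' := c.rotate _ hvc with hc'def
    clear_value c'
    obtain ⟨y, hadj, p, hdec⟩ := SimpleGraph.Walk.not_nil_iff.mp hc'.not_nil
    have hyw : y = w := adj_of_head hvw hv hadj
    have hpnn : ¬ p.Nil := by
      intro hnil
      have h0 : p.length = 0 := SimpleGraph.Walk.nil_iff_length_eq.mp hnil
      have h1 : c'.length = 1 := by rw [hdec, SimpleGraph.Walk.length_cons, h0]
      have := hc'.three_le_length
      omega
    have hprnn : ¬ p.reverse.Nil := by
      rw [SimpleGraph.Walk.nil_iff_length_eq, SimpleGraph.Walk.length_reverse]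
      rw [SimpleGraph.Walk.nil_iff_length_eq] at hpnn
      exact hpnn
    obtain ⟨z, hadj2, q, hdec2⟩ := SimpleGraph.Walk.not_nil_iff.mp hprnn
    have hzw : z = w := adj_of_head hvw hv hadj2
    have hmem : s(v, z) ∈ p.edges := by
      have h1 : s(v, z) ∈ p.reverse.edges := by
        rw [hdec2, SimpleGraph.Walk.edges_cons]
        exact List.mem_cons_self
      rw [SimpleGraph.Walk.edges_reverse, List.mem_reverse] at h1
      exact h1
    have heq : s(v, z) = s(v, y) := by rw [hzw, hyw]
    rw [heq] at hmem
    have hnodup : c'.edges.Nodup := hc'.isCircuit.isTrail.edges_nodup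
    rw [hdec, SimpleGraph.Walk.edges_cons] at hnodup
    exact (List.nodup_cons.mp hnodup).1 hmem
  · -- v not on the cycle: transfer to fromEdgeSet s
    have hedges : ∀ e ∈ c.edges, e ∈ (fromEdgeSet s).edgeSet := by
      intro e he
      have h1 : e ∈ (fromEdgeSet (insert s(v, w) s)).edgeSet := c.edges_subset_edgeSet he
      rw [edgeSet_fromEdgeSet] at h1 ⊢
      obtain ⟨h2, h3⟩ := h1
      rcases Set.mem_insert_iff.mp h2 with h4 | h4
      · exfalso
        subst h4
        exact hvc (c.fst_mem_support_of_mem_edges he)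
      · exact ⟨h4, h3⟩
    exact hacy (c.transfer _ hedges) (hc.transfer hedges)

lemma tree_construction :
    ∀ (L : List (Zd d)), L.Nodup → L ≠ [] →
    ∃ T : Finset (Sym2 (Zd d)),
      (∀ e ∈ T, ∀ z ∈ e, z ∈ L.toFinset) ∧
      (∀ e ∈ T, ¬ e.IsDiag) ∧
      (fromEdgeSet (↑T : Set (Sym2 (Zd d)))).IsAcyclic ∧
      (∀ z ∈ L.toFinset, ∀ w ∈ L.toFinset,
        (fromEdgeSet (↑T : Set (Sym2 (Zd d)))).Reachable z w) ∧
      ∏ e ∈ T, brE e = Plist L := by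
  classical
  intro L
  induction L with
  | nil => intro _ h; exact absurd rfl h
  | cons a l ih =>
    intro hnd _
    rcases eq_or_ne l ([] : List (Zd d)) with rfl | hlne
    · refine ⟨∅, by simp, by simp, ?_, ?_, by simp⟩
      · rw [Finset.coe_empty, fromEdgeSet_empty]; exact isAcyclic_bot
      · intro z hz w hw
        simp only [List.toFinset_cons, List.toFinset_nil, LawfulSingleton.insert_empty_eq,
          Finset.mem_singleton] at hz hw
        subst hz; subst hw
        exact SimpleGraph.Reachable.refl _
    · have hal : a ∉ l := (List.nodup_cons.mp hnd).1
      have hlnd : l.Nodup := (List.nodup_cons.mp hnd).2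
      obtain ⟨T', hend, hdiag, hacy, hreach, hprod⟩ := ih hlnd hlne
      have hfsne : l.toFinset.Nonempty := by
        cases l with
        | nil => exact absurd rfl hlne
        | cons b t => exact ⟨b, by simp⟩
      obtain ⟨w₀, hw₀, hrho⟩ := exists_rho_eq a hfsne
      have haw₀ : a ≠ w₀ := fun h => hal (List.mem_toFinset.mp (h ▸ hw₀))
      have hnotmem : s(a, w₀) ∉ T' := by
        intro hmem
        exact hal (List.mem_toFinset.mp (by exact_mod_cast hend _ hmem a (Sym2.mem_mk_left a w₀)))
      refine ⟨insert s(a, w₀) T', ?_, ?_, ?_, ?_, ?_⟩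
      · intro e he z hz
        rcases Finset.mem_insert.mp he with rfl | he'
        · rcases Sym2.mem_iff.mp hz with rfl | rfl
          · simp
          · simp only [List.toFinset_cons, Finset.mem_insert]
            exact Or.inr hw₀
        · simp only [List.toFinset_cons, Finset.mem_insert]
          exact Or.inr (hend _ he' z hz)
      · intro e he
        rcases Finset.mem_insert.mp he with rfl | he'
        · rw [Sym2.mk_isDiag_iff]; exact haw₀
        · exact hdiag _ he'
      · rw [Finset.coe_insert]
        refine acyclic_insert_pendant _ a w₀ haw₀ hacy ?_
        intro e he hae
        exact hal (List.mem_toFinset.mp (hend _ (by exact_mod_cast he) a hae))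
      · -- reachability
        have hmono : fromEdgeSet (↑T' : Set (Sym2 (Zd d)))
            ≤ fromEdgeSet (↑(insert s(a, w₀) T') : Set (Sym2 (Zd d))) := by
          apply fromEdgeSet_mono
          rw [Finset.coe_insert]
          exact Set.subset_insert _ _
        have hadj : (fromEdgeSet (↑(insert s(a, w₀) T') : Set (Sym2 (Zd d)))).Adj a w₀ := by
          rw [fromEdgeSet_adj]
          exact ⟨by simp, haw₀⟩
        have kreach : ∀ z ∈ l.toFinset,
            (fromEdgeSet (↑(insert s(a, w₀) T') : Set (Sym2 (Zd d)))).Reachable a z := by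
          intro z hz
          exact hadj.reachable.trans ((hreach w₀ hw₀ z hz).mono hmono)
        intro z hz w hw
        simp only [List.toFinset_cons, Finset.mem_insert] at hz hw
        rcases hz with rfl | hz <;> rcases hw with rfl | hw
        · exact SimpleGraph.Reachable.refl _
        · exact kreach w hw
        · exact (kreach z hz).symm
        · exact ((hreach z hz w hw).mono hmono)
      · rw [Finset.prod_insert hnotmem, hprod, brE_mk, ← hrho, Plist_cons a hlne]

set_option maxHeartbeats 1000000 in
def SpreadSet {d : ℕ} (W : Finset (Zd d)) : Set ℝ :=
  {p | ∃ E : Finset (Sym2 {x // x ∈ W}),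
    (SimpleGraph.fromEdgeSet (↑E : Set (Sym2 {x // x ∈ W}))).IsTree ∧ (∀ e ∈ E, ¬ e.IsDiag) ∧
    p = ∏ e ∈ E, Sym2.lift ⟨fun u v => br u.1 v.1, fun u v => br_symm u.1 v.1⟩ e}

set_option maxHeartbeats 1000000 in
lemma SpreadSet_nonneg {W : Finset (Zd d)} {p : ℝ} (hp : p ∈ SpreadSet W) : 0 ≤ p := by
  obtain ⟨E, _, _, rfl⟩ := hp
  apply Finset.prod_nonneg
  intro e _
  induction e using Sym2.ind with
  | _ u v => rw [Sym2.lift_mk]; exact br_nonneg _ _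

set_option maxHeartbeats 1000000 in
lemma liftSub_eq_brE {W : Finset (Zd d)} (e : Sym2 {x // x ∈ W}) :
    Sym2.lift ⟨fun u v => br u.1 v.1, fun u v => br_symm u.1 v.1⟩ e
      = brE (Sym2.map Subtype.val e) := by
  induction e using Sym2.ind with
  | _ u v => rw [Sym2.lift_mk, Sym2.map_pair_eq, brE_mk]

set_option maxHeartbeats 1000000 in
lemma upper_mem (L : List (Zd d)) (hnd : L.Nodup) (hne : L ≠ []) :
    Plist L ∈ SpreadSet L.toFinset := by
  classical
  obtain ⟨T, hend, hdiag, hacy, hreach, hprod⟩ := tree_construction L hnd hne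
  set W := L.toFinset with hW
  set E : Finset (Sym2 {x // x ∈ W}) :=
    Finset.univ.filter (fun e => Sym2.map Subtype.val e ∈ T) with hE
  have hmemE : ∀ (u v : {x // x ∈ W}), (s(u, v) ∈ E ↔ s(u.1, v.1) ∈ T) := by
    intro u v
    rw [hE, Finset.mem_filter]
    simp [Sym2.map_pair_eq]
  -- image of E is T
  have himg : E.image (Sym2.map Subtype.val) = T := by
    apply Finset.Subset.antisymm
    · intro e he
      rw [Finset.mem_image] at he
      obtain ⟨e', he', rfl⟩ := he
      rw [hE, Finset.mem_filter] at he'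
      exact he'.2
    · intro e he
      induction e using Sym2.ind with
      | _ x y =>
        have hx : x ∈ W := hend _ he x (Sym2.mem_mk_left x y)
        have hy : y ∈ W := hend _ he y (Sym2.mem_mk_right x y)
        rw [Finset.mem_image]
        exact ⟨s(⟨x, hx⟩, ⟨y, hy⟩), (hmemE _ _).mpr (by exact_mod_cast he),
          by rw [Sym2.map_pair_eq]⟩
  refine ⟨E, ?_, ?_, ?_⟩
  · -- IsTree
    constructor
    · -- connected
      have : Nonempty {x // x ∈ W} := by
        cases L with
        | nil => exact absurd rfl hne
        | cons b t => exact ⟨⟨b, by simp [hW]⟩⟩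
      rw [connected_iff]
      refine ⟨?_, this⟩
      intro u v
      -- lift a walk from the base graph
      have hr : (fromEdgeSet (↑T : Set (Sym2 (Zd d)))).Reachable u.1 v.1 :=
        hreach u.1 u.2 v.1 v.2
      obtain ⟨p⟩ := hr
      -- induction on the walk
      have lift : ∀ (x y : Zd d) (q : (fromEdgeSet (↑T : Set (Sym2 (Zd d)))).Walk x y)
          (hx : x ∈ W) (hy : y ∈ W),
          (fromEdgeSet (↑E : Set (Sym2 {x // x ∈ W}))).Reachable ⟨x, hx⟩ ⟨y, hy⟩ := by
        intro x y q
        induction q with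
        | nil => intro hx hy; exact SimpleGraph.Reachable.refl _
        | @cons x' z y' h q ihq =>
          intro hx hy
          rw [fromEdgeSet_adj] at h
          obtain ⟨hmem, hne'⟩ := h
          have hzW : z ∈ W := hend _ (by exact_mod_cast hmem) z (Sym2.mem_mk_right x' z)
          have hadj : (fromEdgeSet (↑E : Set (Sym2 {x // x ∈ W}))).Adj ⟨x', hx⟩ ⟨z, hzW⟩ := by
            rw [fromEdgeSet_adj]
            constructor
            · exact_mod_cast (hmemE ⟨x', hx⟩ ⟨z, hzW⟩).mpr (by exact_mod_cast hmem)
            · intro hcontr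
              exact hne' (congrArg Subtype.val hcontr)
          exact hadj.reachable.trans (ihq hzW hy)
      have := lift u.1 v.1 p u.2 v.2
      simpa using this
    · -- acyclic
      intro u c hc
      have hmap : ∀ {a b : {x // x ∈ W}},
          (fromEdgeSet (↑E : Set (Sym2 {x // x ∈ W}))).Adj a b →
          (fromEdgeSet (↑T : Set (Sym2 (Zd d)))).Adj a.1 b.1 := by
        intro a b hadj
        rw [fromEdgeSet_adj] at hadj ⊢
        obtain ⟨hmem, hne'⟩ := hadj
        constructor
        · exact_mod_cast (hmemE a b).mp (by exact_mod_cast hmem)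
        · exact fun h => hne' (Subtype.ext h)
      have hcyc := (SimpleGraph.Walk.map_isCycle_iff_of_injective
        (f := ⟨Subtype.val, hmap⟩)
        (by exact Subtype.val_injective)).mpr hc
      exact hacy _ hcyc
  · -- nondiag
    intro e he
    induction e using Sym2.ind with
    | _ u v =>
      rw [Sym2.mk_isDiag_iff]
      intro huv
      have : s(u.1, v.1) ∈ T := (hmemE u v).mp he
      have := hdiag _ this
      rw [Sym2.mk_isDiag_iff] at this
      exact this (congrArg Subtype.val huv)
  · -- product
    rw [← hprod, ← himg]
    rw [Finset.prod_image ?inj]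
    case inj =>
      intro e₁ h₁ e₂ h₂ heq
      exact Sym2.map.injective Subtype.val_injective heq
    apply Finset.prod_congr rfl
    intro e _
    exact (liftSub_eq_brE e).symm

def GoodList {d : ℕ} (T : Finset (Sym2 (Zd d))) : List (Zd d) → Prop
  | [] => True
  | [_] => True
  | a :: b :: l => (∃ w ∈ b :: l, s(a, w) ∈ T) ∧ GoodList T (b :: l)

lemma GoodList_mono {T T' : Finset (Sym2 (Zd d))} :
    ∀ {l : List (Zd d)}, GoodList T l →
      (∀ x y, x ∈ l → y ∈ l → s(x, y) ∈ T → s(x, y) ∈ T') → GoodList T' l := by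
  intro l
  induction l with
  | nil => intro _ _; trivial
  | cons a t ih =>
    cases t with
    | nil => intro _ _; trivial
    | cons b u =>
      rintro ⟨⟨w, hw, hmem⟩, hrest⟩ himp
      refine ⟨⟨w, hw, himp a w (by simp) (by simp [hw]) hmem⟩, ?_⟩
      exact ih hrest (fun x y hx hy h => himp x y (by simp [hx]) (by simp [hy]) h)

lemma Plist_le_prod {T : Finset (Sym2 (Zd d))} :
    ∀ {l : List (Zd d)}, l.Nodup → GoodList T l →
      Plist l ≤ ∏ e ∈ T, brE e := by
  classical
  intro l
  induction l generalizing T with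
  | nil =>
    intro _ _
    have h1 : (1:ℝ) ≤ ∏ e ∈ T, brE e := by
      rw [← Finset.prod_const_one (s := T)]
      exact Finset.prod_le_prod (fun i _ => zero_le_one) (fun i _ => one_le_brE i)
    simpa using h1
  | cons a t ih =>
    cases t with
    | nil =>
      intro _ _
      have h1 : (1:ℝ) ≤ ∏ e ∈ T, brE e := by
        rw [← Finset.prod_const_one (s := T)]
        exact Finset.prod_le_prod (fun i _ => zero_le_one) (fun i _ => one_le_brE i)
      simpa using h1
    | cons b u =>
      rintro hnd ⟨⟨w, hw, hmem⟩, hrest⟩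
      have hrho : rho {a} (b :: u).toFinset ≤ brE s(a, w) := by
        rw [brE_mk]
        exact rho_le_br (List.mem_toFinset.mpr hw)
      have hanotin : a ∉ (b :: u) := (List.nodup_cons.mp hnd).1
      have hGrest : GoodList (T.erase s(a, w)) (b :: u) := by
        refine GoodList_mono hrest ?_
        intro x y hx hy hxy
        rw [Finset.mem_erase]
        refine ⟨?_, hxy⟩
        intro heq
        have : a ∈ s(x, y) := heq ▸ Sym2.mem_mk_left a w
        rcases Sym2.mem_iff.mp this with rfl | rfl
        · exact hanotin hx
        · exact hanotin hy
      have hPrest : Plist (b :: u) ≤ ∏ e ∈ T.erase s(a, w), brE e :=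
        ih (List.nodup_cons.mp hnd).2 hGrest
      rw [Plist_cons a (by simp)]
      calc rho {a} (b :: u).toFinset * Plist (b :: u)
          ≤ brE s(a, w) * ∏ e ∈ T.erase s(a, w), brE e := by
            apply mul_le_mul hrho hPrest (Plist_nonneg _) (brE_nonneg _)
        _ = ∏ e ∈ T, brE e := Finset.mul_prod_erase T brE hmem

set_option maxHeartbeats 1000000 in
lemma exists_good_order {W : Finset (Zd d)} (E : Finset (Sym2 {x // x ∈ W}))
    (htree : (fromEdgeSet (↑E : Set (Sym2 {x // x ∈ W}))).IsTree) :
    ∃ Z : List (Zd d), Z.Nodup ∧ Z.toFinset = W ∧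
      GoodList (E.image (Sym2.map Subtype.val)) Z := by
  classical
  have conn : (fromEdgeSet (↑E : Set (Sym2 {x // x ∈ W}))).Connected := htree.1
  have hne : Nonempty {x // x ∈ W} := conn.nonempty
  obtain ⟨r⟩ := hne
  set G := fromEdgeSet (↑E : Set (Sym2 {x // x ∈ W})) with hGdef
  -- auxiliary: sorted descending + downward closed ⇒ GoodList
  have aux : ∀ (l : List {x // x ∈ W}),
      List.Pairwise (fun a b => G.dist b r ≤ G.dist a r) l → l.Nodup →
      (∀ u z, u ∈ l → G.dist z r < G.dist u r → z ∈ l) →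
      GoodList (E.image (Sym2.map Subtype.val)) (l.map Subtype.val) := by
    intro l
    induction l with
    | nil => intro _ _ _; trivial
    | cons a t iht =>
      cases t with
      | nil => intro _ _ _; trivial
      | cons b t' =>
        intro hpw hnd hdc
        have hab : a ≠ b := by
          intro h
          exact (List.nodup_cons.mp hnd).1 (h ▸ List.mem_cons_self (a := b) (l := t'))
        have har : a ≠ r := by
          intro h
          have hka : G.dist a r = 0 := by rw [h, SimpleGraph.dist_self]
          have hkb : G.dist b r ≤ G.dist a r := (List.pairwise_cons.mp hpw).1 b (by simp)
          have hkb0 : G.dist b r = 0 := by omega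
          rcases SimpleGraph.dist_eq_zero_iff_eq_or_not_reachable.mp hkb0 with h' | h'
          · exact hab (h.trans h'.symm)
          · exact h' (conn.preconnected b r)
        have hreach : G.Reachable a r := conn.preconnected a r
        have hka : 0 < G.dist a r := by
          rcases Nat.eq_zero_or_pos (G.dist a r) with h | h
          · exfalso
            rcases SimpleGraph.dist_eq_zero_iff_eq_or_not_reachable.mp h with h' | h'
            · exact har h'
            · exact h' hreach
          · exact h
        obtain ⟨p, hp⟩ := hreach.exists_walk_length_eq_dist
        obtain ⟨y, hadj, q, rfl⟩ := SimpleGraph.Walk.exists_eq_cons_of_ne har p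
        have hkylt : G.dist y r < G.dist a r := by
          have h1 : G.dist y r ≤ q.length := SimpleGraph.dist_le q
          have h2 : q.length + 1 = G.dist a r := by
            rw [← hp, SimpleGraph.Walk.length_cons]
          omega
        have hy_mem : y ∈ a :: b :: t' := hdc a y (by simp) hkylt
        have hya : y ≠ a := fun h => (h ▸ hadj.ne') rfl
        have hy_bt : y ∈ b :: t' := by
          rcases List.mem_cons.mp hy_mem with h | h
          · exact absurd h hya
          · exact h
        have hedge : s(a.1, y.1) ∈ E.image (Sym2.map Subtype.val) := by
          have h1 : s(a, y) ∈ E := by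
            have h2 := hadj
            rw [hGdef, fromEdgeSet_adj] at h2
            exact_mod_cast h2.1
          rw [Finset.mem_image]
          exact ⟨s(a, y), h1, by rw [Sym2.map_pair_eq]⟩
        constructor
        · exact ⟨y.1, List.mem_map_of_mem (f := Subtype.val) hy_bt, hedge⟩
        · apply iht (List.pairwise_cons.mp hpw).2 (List.nodup_cons.mp hnd).2
          intro u z hu hz
          have hz' : z ∈ a :: b :: t' := hdc u z (List.mem_cons_of_mem a hu) hz
          rcases List.mem_cons.mp hz' with h | h
          · exfalso
            subst h
            have : G.dist u r ≤ G.dist z r := (List.pairwise_cons.mp hpw).1 u hu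
            omega
          · exact h
  -- construct the sorted list
  set ZV := (Finset.univ : Finset {x // x ∈ W}).toList.mergeSort
    (fun a b => decide (G.dist b r ≤ G.dist a r)) with hZV
  have hperm : ZV.Perm (Finset.univ : Finset {x // x ∈ W}).toList := List.mergeSort_perm _ _
  have hndZV : ZV.Nodup := hperm.nodup_iff.mpr (Finset.nodup_toList _)
  have hmemZV : ∀ u : {x // x ∈ W}, u ∈ ZV := by
    intro u
    rw [hperm.mem_iff, Finset.mem_toList]
    exact Finset.mem_univ u
  have hsorted : List.Pairwise (fun a b => G.dist b r ≤ G.dist a r) ZV := by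
    have h1 := List.pairwise_mergeSort (le := fun a b => decide (G.dist b r ≤ G.dist a r))
      (fun a b c h1 h2 => by
        simp only [decide_eq_true_eq] at h1 h2 ⊢; omega)
      (fun a b => by
        simp only [Bool.or_eq_true, decide_eq_true_eq]
        exact Nat.le_total (G.dist b r) (G.dist a r))
      (Finset.univ : Finset {x // x ∈ W}).toList
    exact h1.imp (fun h => by simpa [decide_eq_true_eq] using h)
  refine ⟨ZV.map Subtype.val, ?_, ?_, ?_⟩
  · exact hndZV.map Subtype.val_injective
  · ext z
    simp only [List.mem_toFinset, List.mem_map]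
    constructor
    · rintro ⟨u, _, rfl⟩; exact u.2
    · intro hz; exact ⟨⟨z, hz⟩, hmemZV _, rfl⟩
  · exact aux ZV hsorted hndZV (fun u z _ _ => hmemZV z)

set_option maxHeartbeats 1000000 in
lemma lower_bound (L : List (Zd d)) (hnd : L.Nodup) (hne : L ≠ []) :
    ∀ p ∈ SpreadSet L.toFinset, Plist L ≤ 2 ^ (L.length * L.length) * p := by
  classical
  rintro p ⟨E, htree, hdiag, rfl⟩
  obtain ⟨Z, hndZ, hfsZ, hgood⟩ := exists_good_order E htree
  have hprodeq : ∏ e ∈ E.image (Sym2.map Subtype.val), brE e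
      = ∏ e ∈ E, Sym2.lift ⟨fun u v => br u.1 v.1, fun u v => br_symm u.1 v.1⟩ e := by
    rw [Finset.prod_image (fun e₁ _ e₂ _ heq => Sym2.map.injective Subtype.val_injective heq)]
    exact Finset.prod_congr rfl (fun e _ => (liftSub_eq_brE e).symm)
  have hZle : Plist Z ≤ ∏ e ∈ E.image (Sym2.map Subtype.val), brE e :=
    Plist_le_prod hndZ hgood
  have hLZ : L.Perm Z :=
    List.perm_of_nodup_nodup_toFinset_eq hnd hndZ (by rw [hfsZ])
  have hperm : Plist L ≤ 2 ^ (L.length * L.length) * Plist Z :=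
    Plist_perm L.length rfl hLZ hnd
  calc Plist L ≤ 2 ^ (L.length * L.length) * Plist Z := hperm
    _ ≤ 2 ^ (L.length * L.length)
        * ∏ e ∈ E, Sym2.lift ⟨fun u v => br u.1 v.1, fun u v => br_symm u.1 v.1⟩ e := by
        rw [← hprodeq]
        exact mul_le_mul_of_nonneg_left hZle (by positivity)



end Dev

lemma spread_eq_sInf {d : ℕ} (W : Finset (Zd d)) : spread W = sInf (SpreadSet W) := rfl

theorem statement2 {d : ℕ} (n : ℕ) (hn : 2 ≤ n) :
    ∃ c C : ℝ, 0 < c ∧ 0 < C ∧ ∀ x : ℕ → Zd d,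
      c * ∏ i ∈ Finset.range (n - 1), rho {x i} ((Finset.Icc (i + 1) (n - 1)).image x)
          ≤ spread ((Finset.range n).image x) ∧
      spread ((Finset.range n).image x)
          ≤ C * ∏ i ∈ Finset.range (n - 1), rho {x i} ((Finset.Icc (i + 1) (n - 1)).image x) := by
  classical
  refine ⟨((2:ℝ) ^ (n * n))⁻¹, 1, by positivity, one_pos, ?_⟩
  intro x
  have hn1 : 1 ≤ n := by omega
  obtain ⟨L, hnd, hne, hfs, hP⟩ := exists_good_list x n hn1
  have hQ : Qprod x n
      = ∏ i ∈ Finset.range (n - 1), rho {x i} ((Finset.Icc (i + 1) (n - 1)).image x) := rfl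
  have hmem : Plist L ∈ SpreadSet ((Finset.range n).image x) := by
    rw [← hfs]; exact upper_mem L hnd hne
  have hbdd : BddBelow (SpreadSet ((Finset.range n).image x)) :=
    ⟨0, fun p hp => SpreadSet_nonneg hp⟩
  rw [spread_eq_sInf]
  constructor
  · -- lower bound
    apply le_csInf ⟨Plist L, hmem⟩
    intro p hp
    have hlow : Plist L ≤ 2 ^ (L.length * L.length) * p := by
      apply lower_bound L hnd hne
      rw [hfs]; exact hp
    have hlen : L.length ≤ n := by
      have h1 : L.toFinset.card = L.length := List.toFinset_card_of_nodup hnd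
      have h2 : ((Finset.range n).image x).card ≤ n := by
        calc ((Finset.range n).image x).card ≤ (Finset.range n).card := Finset.card_image_le
          _ = n := Finset.card_range n
      rw [hfs] at h1
      omega
    have hp0 : 0 ≤ p := SpreadSet_nonneg hp
    have hexp : (2:ℝ) ^ (L.length * L.length) ≤ 2 ^ (n * n) :=
      pow_le_pow_right₀ (by norm_num) (Nat.mul_le_mul hlen hlen)
    have hQle : Qprod x n ≤ 2 ^ (n * n) * p := by
      rw [← hP]
      calc Plist L ≤ 2 ^ (L.length * L.length) * p := hlow
        _ ≤ 2 ^ (n * n) * p := mul_le_mul_of_nonneg_right hexp hp0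
    rw [← hQ]
    calc ((2:ℝ) ^ (n * n))⁻¹ * Qprod x n
        ≤ ((2:ℝ) ^ (n * n))⁻¹ * (2 ^ (n * n) * p) :=
          mul_le_mul_of_nonneg_left hQle (by positivity)
      _ = p := by
          rw [← mul_assoc, inv_mul_cancel₀ (by positivity), one_mul]
  · -- upper bound
    rw [one_mul, ← hQ, ← hP]
    exact csInf_le hbdd hmem
end

section
/- Let α, β ∈ [0,d) with α+β > d and set γ := α+β−d. Then there exist constants c,C > 0 such that for all v,w ∈ Z^d, c·⟨vw⟩^{−γ} ≤ Σ_{x∈Z^d} ⟨vx⟩^{−α}·⟨xw⟩^{−β} ≤ C·⟨vw⟩^{−γ}. -/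
open MeasureTheory ProbabilityTheory Finset

set_option maxHeartbeats 1000000

namespace S3

variable {d : ℕ}

def latN (u x : Zd d) : ℕ := 1 + ∑ i, (x i - u i).natAbs

lemma one_le_latN (u x : Zd d) : 1 ≤ latN u x := Nat.le_add_right _ _

lemma latN_pos (u x : Zd d) : 0 < latN u x := one_le_latN u x

lemma latN_symm (u x : Zd d) : latN u x = latN x u := by
  unfold latN
  congr 1
  exact Finset.sum_congr rfl fun i _ => by omega

lemma latN_triangle (v w x : Zd d) : latN v w + 1 ≤ latN v x + latN x w := by
  unfold latN
  have h : ∑ i, (w i - v i).natAbs ≤ ∑ i, (x i - v i).natAbs + ∑ i, (w i - x i).natAbs := by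
    rw [← Finset.sum_add_distrib]
    refine Finset.sum_le_sum fun i _ => ?_
    have : w i - v i = (x i - v i) + (w i - x i) := by ring
    rw [this]
    exact Int.natAbs_add_le _ _
  omega

lemma br_eq (u x : Zd d) : br u x = (latN u x : ℝ) := by
  unfold br latN
  push_cast
  congr 1
  refine Finset.sum_congr rfl fun i _ => ?_
  rw [Nat.cast_natAbs]
  push_cast
  rw [abs_sub_comm]

noncomputable def box (u : Zd d) (m : ℕ) : Finset (Zd d) :=
  Fintype.piFinset fun i => Finset.Icc (u i - (m : ℤ)) (u i + (m : ℤ))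

lemma mem_box (u : Zd d) (m : ℕ) (x : Zd d) (h : latN u x ≤ m + 1) : x ∈ box u m := by
  rw [box, Fintype.mem_piFinset]
  intro i
  have h1 : (x i - u i).natAbs ≤ m := by
    have h2 : (x i - u i).natAbs ≤ ∑ j, (x j - u j).natAbs :=
      Finset.single_le_sum (f := fun j => (x j - u j).natAbs) (fun _ _ => Nat.zero_le _) (Finset.mem_univ i)
    unfold latN at h; omega
  rw [Finset.mem_Icc]
  omega

lemma card_box (u : Zd d) (m : ℕ) : (box u m).card = (2 * m + 1) ^ d := by
  rw [box, Fintype.card_piFinset]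
  have : ∀ i : Fin d, (Finset.Icc (u i - (m : ℤ)) (u i + (m : ℤ))).card = 2 * m + 1 := by
    intro i
    rw [Int.card_Icc]
    omega
  simp only [this]
  simp [Finset.prod_const]

end S3

open scoped ENNReal

namespace S3

variable {d : ℕ}

lemma tsum_shells (u : Zd d) (f : Zd d → ℝ≥0∞) :
    ∑' x : Zd d, f x
      = ∑' k : ℕ, ∑' x : {y : Zd d // Nat.log 2 (latN u y) = k}, f x.1 := by
  rw [← ENNReal.tsum_sigma]
  exact ((Equiv.sigmaFiberEquiv fun y : Zd d => Nat.log 2 (latN u y)).tsum_eq f).symm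

lemma shell_tsum_le (u : Zd d) (k : ℕ) (f : Zd d → ℝ≥0∞) (M : ℝ≥0∞)
    (hf : ∀ x, Nat.log 2 (latN u x) = k → f x ≤ M) :
    ∑' x : {y : Zd d // Nat.log 2 (latN u y) = k}, f x.1
      ≤ (2 : ℝ≥0∞) ^ ((k + 3) * d) * M := by
  classical
  have hsub : {y : Zd d | Nat.log 2 (latN u y) = k} ⊆ (↑(box u (2 ^ (k + 1))) : Set (Zd d)) := by
    intro y hy
    have hy' : Nat.log 2 (latN u y) = k := hy
    have h1 : latN u y < 2 ^ (Nat.log 2 (latN u y) + 1) :=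
      Nat.lt_pow_succ_log_self (by norm_num) _
    rw [hy'] at h1
    exact mem_box u _ y (by omega)
  calc ∑' x : {y : Zd d // Nat.log 2 (latN u y) = k}, f x.1
      = ∑' x : ↑{y : Zd d | Nat.log 2 (latN u y) = k}, f x.1 := rfl
    _ = ∑' x : Zd d, Set.indicator {y | Nat.log 2 (latN u y) = k} f x :=
        _root_.tsum_subtype {y : Zd d | Nat.log 2 (latN u y) = k} f
    _ ≤ ∑' x : Zd d,
        Set.indicator (↑(box u (2 ^ (k + 1))) : Set (Zd d)) (fun _ => M) x := by
        refine ENNReal.tsum_le_tsum fun x => ?_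
        by_cases hx : Nat.log 2 (latN u x) = k
        · rw [Set.indicator_of_mem (by exact hx), Set.indicator_of_mem (hsub hx)]
          exact hf x hx
        · rw [Set.indicator_of_notMem (by exact hx)]
          exact zero_le
    _ = ∑ x ∈ box u (2 ^ (k + 1)), M := by
        rw [tsum_eq_sum (s := box u (2 ^ (k + 1)))
          (fun b hb => Set.indicator_of_notMem (by exact hb) _)]
        exact Finset.sum_congr rfl fun x hx => Set.indicator_of_mem (by exact hx) _
    _ = ((2 * 2 ^ (k + 1) + 1) ^ d : ℕ) * M := by
        rw [Finset.sum_const, card_box, nsmul_eq_mul]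
    _ ≤ (2 : ℝ≥0∞) ^ ((k + 3) * d) * M := by
        refine mul_le_mul_left ?_ M
        have hn : (2 * 2 ^ (k + 1) + 1) ^ d ≤ 2 ^ ((k + 3) * d) := by
          rw [pow_mul]
          refine Nat.pow_le_pow_left ?_ d
          have : 2 ^ (k + 2) + 1 ≤ 2 ^ (k + 3) := by
            have : (1:ℕ) ≤ 2 ^ (k + 2) := Nat.one_le_two_pow
            calc 2 ^ (k + 2) + 1 ≤ 2 ^ (k + 2) + 2 ^ (k + 2) := by omega
              _ = 2 ^ (k + 3) := by ring
          calc 2 * 2 ^ (k + 1) + 1 = 2 ^ (k + 2) + 1 := by ring_nf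
            _ ≤ 2 ^ (k + 3) := this
        calc ((2 * 2 ^ (k + 1) + 1) ^ d : ℕ) ≤ ((2 ^ ((k + 3) * d) : ℕ) : ℝ≥0∞) :=
            Nat.cast_le.mpr hn
          _ = (2 : ℝ≥0∞) ^ ((k + 3) * d) := by push_cast; ring

end S3

namespace S3

variable {d : ℕ}

lemma pow_cast_ofReal (n : ℕ) :
    (2 : ℝ≥0∞) ^ n = ENNReal.ofReal ((2:ℝ) ^ n) := by
  rw [ENNReal.ofReal_pow (by norm_num)]
  norm_num

lemma tailsum (s : ℝ) (hds : (d:ℝ) < s) :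
    ∃ C : ℝ, 0 < C ∧ ∀ (u : Zd d) (m : ℕ), 1 ≤ m →
      ∑' x : Zd d, ENNReal.ofReal (if m ≤ latN u x then (latN u x : ℝ) ^ (-s) else 0)
        ≤ ENNReal.ofReal (C * (m:ℝ) ^ ((d:ℝ) - s)) := by
  have hd0 : (0:ℝ) ≤ d := Nat.cast_nonneg d
  set ρ : ℝ := (2:ℝ) ^ ((d:ℝ) - s) with hρ
  have hρ0 : 0 < ρ := Real.rpow_pos_of_pos two_pos _
  have hρ1 : ρ < 1 := Real.rpow_lt_one_of_one_lt_of_neg one_lt_two (by linarith)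
  refine ⟨(2:ℝ)^(3*d) * (2:ℝ)^s * (1-ρ)⁻¹,
    mul_pos (mul_pos (by positivity) (by positivity)) (inv_pos.mpr (by linarith)), ?_⟩
  intro u m hm
  set K₀ : ℕ := Nat.log 2 m with hK₀
  set g : Zd d → ℝ≥0∞ :=
    fun x => ENNReal.ofReal (if m ≤ latN u x then (latN u x : ℝ) ^ (-s) else 0) with hg
  set M : ℕ → ℝ≥0∞ :=
    fun k => ENNReal.ofReal (if K₀ ≤ k then ((2:ℝ)^k) ^ (-s) else 0) with hM
  have step1 : ∑' x : Zd d, g x ≤ ∑' k : ℕ, (2:ℝ≥0∞) ^ ((k+3)*d) * M k := by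
    rw [tsum_shells u g]
    refine ENNReal.tsum_le_tsum fun k => shell_tsum_le u k g (M k) fun x hx => ?_
    by_cases hmx : m ≤ latN u x
    · have hk : K₀ ≤ k := hx ▸ Nat.log_mono_right hmx
      have h2k : ((2:ℝ)^k) ≤ (latN u x : ℝ) := by
        have := Nat.pow_log_le_self 2 (Nat.one_le_iff_ne_zero.mp (one_le_latN u x))
        rw [hx] at this
        exact_mod_cast this
      have hb : (latN u x : ℝ) ^ (-s) ≤ ((2:ℝ)^k) ^ (-s) :=
        Real.rpow_le_rpow_of_nonpos (by positivity) h2k (by linarith)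
      simp only [hg, hM, if_pos hmx, if_pos hk]
      exact ENNReal.ofReal_le_ofReal hb
    · simp only [hg, if_neg hmx, ENNReal.ofReal_zero]
      exact zero_le
  -- real-side sequence
  set h : ℕ → ℝ :=
    fun k => (2:ℝ)^((k+3)*d) * (if K₀ ≤ k then ((2:ℝ)^k) ^ (-s) else 0) with hh
  have step2 : ∀ k, (2:ℝ≥0∞) ^ ((k+3)*d) * M k = ENNReal.ofReal (h k) := by
    intro k
    rw [hh, hM]
    simp only []
    rw [ENNReal.ofReal_mul (by positivity), pow_cast_ofReal]
  have hexp : ∀ k : ℕ, (2:ℝ)^((k+3)*d) * ((2:ℝ)^k) ^ (-s) = (2:ℝ)^(3*d) * ρ^k := by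
    intro k
    rw [← Real.rpow_natCast 2 ((k+3)*d), ← Real.rpow_natCast 2 k,
      ← Real.rpow_mul (by norm_num : (0:ℝ) ≤ 2), ← Real.rpow_natCast 2 (3*d),
      hρ, ← Real.rpow_natCast ((2:ℝ) ^ ((d:ℝ) - s)) k,
      ← Real.rpow_mul (by norm_num : (0:ℝ) ≤ 2),
      ← Real.rpow_add (by norm_num : (0:ℝ) < 2),
      ← Real.rpow_add (by norm_num : (0:ℝ) < 2)]
    congr 1
    push_cast
    ring
  have hρK : ρ ^ K₀ ≤ (2:ℝ)^s * (m:ℝ) ^ ((d:ℝ) - s) := by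
    have h2K : (m:ℝ)/2 ≤ (2:ℝ)^K₀ := by
      have := Nat.lt_pow_succ_log_self (by norm_num : 1 < 2) m
      rw [← hK₀] at this
      have : (m:ℝ) < 2 ^ (K₀+1) := by exact_mod_cast this
      rw [pow_succ] at this
      linarith
    have hm2 : (0:ℝ) < (m:ℝ)/2 := by
      have : (1:ℝ) ≤ (m:ℝ) := by exact_mod_cast hm
      linarith
    calc ρ ^ K₀ = ((2:ℝ)^K₀) ^ ((d:ℝ) - s) := by
          rw [hρ, ← Real.rpow_natCast ((2:ℝ) ^ ((d:ℝ) - s)) K₀,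
            ← Real.rpow_natCast 2 K₀, ← Real.rpow_mul (by norm_num : (0:ℝ) ≤ 2),
            ← Real.rpow_mul (by norm_num : (0:ℝ) ≤ 2), mul_comm]
      _ ≤ ((m:ℝ)/2) ^ ((d:ℝ) - s) :=
          Real.rpow_le_rpow_of_nonpos hm2 h2K (by linarith)
      _ = (m:ℝ) ^ ((d:ℝ) - s) * (2:ℝ) ^ (s - (d:ℝ)) := by
          rw [Real.div_rpow (by positivity) (by norm_num), div_eq_mul_inv,
            ← Real.rpow_neg (by norm_num : (0:ℝ) ≤ 2), neg_sub]
      _ ≤ (m:ℝ) ^ ((d:ℝ) - s) * (2:ℝ)^s := by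
          refine mul_le_mul_of_nonneg_left ?_ (by positivity)
          exact Real.rpow_le_rpow_of_exponent_le (by norm_num) (by linarith)
      _ = (2:ℝ)^s * (m:ℝ) ^ ((d:ℝ) - s) := by ring
  have step3 : ∑' k : ℕ, (2:ℝ≥0∞) ^ ((k+3)*d) * M k
      ≤ ENNReal.ofReal ((2:ℝ)^(3*d) * (2:ℝ)^s * (1-ρ)⁻¹ * (m:ℝ)^((d:ℝ)-s)) := by
    simp only [step2]
    have hinj : Function.Injective (fun j : ℕ => K₀ + j) := fun a b hab => by
      simpa using hab
    have hsupp : Function.support (fun k => ENNReal.ofReal (h k))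
        ⊆ Set.range (fun j : ℕ => K₀ + j) := by
      intro k hk
      by_contra hknot
      have hnk : ¬ K₀ ≤ k := fun hle => hknot ⟨k - K₀, by show K₀ + (k - K₀) = k; omega⟩
      apply hk
      simp only [hh, if_neg hnk, mul_zero, ENNReal.ofReal_zero]
    rw [← Function.Injective.tsum_eq hinj hsupp]
    have hbound : ∀ j : ℕ, ENNReal.ofReal (h (K₀ + j))
        ≤ ENNReal.ofReal ((2:ℝ)^(3*d) * ((2:ℝ)^s * (m:ℝ)^((d:ℝ)-s)) * ρ^j) := by
      intro j
      apply ENNReal.ofReal_le_ofReal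
      have he : h (K₀ + j) = 2^(3*d) * ρ^(K₀+j) := by
        rw [hh]
        simp only [if_pos (Nat.le_add_right K₀ j)]
        exact hexp (K₀ + j)
      rw [he, pow_add]
      calc (2:ℝ)^(3*d) * (ρ^K₀ * ρ^j)
          ≤ (2:ℝ)^(3*d) * (((2:ℝ)^s * (m:ℝ)^((d:ℝ)-s)) * ρ^j) := by
            refine mul_le_mul_of_nonneg_left
              (mul_le_mul_of_nonneg_right hρK (by positivity)) (by positivity)
        _ = _ := by ring
    calc ∑' j : ℕ, ENNReal.ofReal (h (K₀+j))
        ≤ ∑' j : ℕ, ENNReal.ofReal ((2:ℝ)^(3*d) * ((2:ℝ)^s * (m:ℝ)^((d:ℝ)-s)) * ρ^j) :=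
          ENNReal.tsum_le_tsum hbound
      _ = ENNReal.ofReal (∑' j : ℕ, (2:ℝ)^(3*d) * ((2:ℝ)^s * (m:ℝ)^((d:ℝ)-s)) * ρ^j) :=
          (ENNReal.ofReal_tsum_of_nonneg (fun j => by positivity)
            ((summable_geometric_of_lt_one hρ0.le hρ1).mul_left _)).symm
      _ = ENNReal.ofReal ((2:ℝ)^(3*d) * (2:ℝ)^s * (1-ρ)⁻¹ * (m:ℝ)^((d:ℝ)-s)) := by
          rw [tsum_mul_left, tsum_geometric_of_lt_one hρ0.le hρ1]
          congr 1
          ring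
  exact le_trans step1 step3

end S3

namespace S3

variable {d : ℕ}

lemma exp_rw (d : ℕ) (t : ℝ) (k : ℕ) :
    (2:ℝ)^((k+3)*d) * ((2:ℝ)^k) ^ (-t) = (2:ℝ)^(3*d) * ((2:ℝ) ^ ((d:ℝ) - t))^k := by
  rw [← Real.rpow_natCast 2 ((k+3)*d), ← Real.rpow_natCast 2 k,
    ← Real.rpow_mul (by norm_num : (0:ℝ) ≤ 2), ← Real.rpow_natCast 2 (3*d),
    ← Real.rpow_natCast ((2:ℝ) ^ ((d:ℝ) - t)) k,
    ← Real.rpow_mul (by norm_num : (0:ℝ) ≤ 2),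
    ← Real.rpow_add (by norm_num : (0:ℝ) < 2),
    ← Real.rpow_add (by norm_num : (0:ℝ) < 2)]
  congr 1
  push_cast
  ring

lemma ballsum (e : ℝ) (he0 : 0 ≤ e) (hed : e < d) :
    ∃ C : ℝ, 0 < C ∧ ∀ (u : Zd d) (m : ℕ), 1 ≤ m →
      ∑' x : Zd d, ENNReal.ofReal (if latN u x ≤ m then (latN u x : ℝ) ^ (-e) else 0)
        ≤ ENNReal.ofReal (C * (m:ℝ) ^ ((d:ℝ) - e)) := by
  set q : ℝ := (2:ℝ) ^ ((d:ℝ) - e) with hq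
  have hq0 : 0 < q := Real.rpow_pos_of_pos two_pos _
  have hq1 : (1:ℝ) < q := by
    have h := Real.rpow_lt_rpow_of_exponent_lt (one_lt_two)
      (show (0:ℝ) < (d:ℝ) - e by linarith)
    rwa [Real.rpow_zero] at h
  refine ⟨(2:ℝ)^(3*d) * (2:ℝ)^((d:ℝ)) * (q-1)⁻¹,
    mul_pos (mul_pos (by positivity) (by positivity)) (inv_pos.mpr (by linarith)), ?_⟩
  intro u m hm
  set K₁ : ℕ := Nat.log 2 m with hK₁
  set g : Zd d → ℝ≥0∞ :=
    fun x => ENNReal.ofReal (if latN u x ≤ m then (latN u x : ℝ) ^ (-e) else 0) with hg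
  set M : ℕ → ℝ≥0∞ :=
    fun k => ENNReal.ofReal (if k ≤ K₁ then ((2:ℝ)^k) ^ (-e) else 0) with hM
  have step1 : ∑' x : Zd d, g x ≤ ∑' k : ℕ, (2:ℝ≥0∞) ^ ((k+3)*d) * M k := by
    rw [tsum_shells u g]
    refine ENNReal.tsum_le_tsum fun k => shell_tsum_le u k g (M k) fun x hx => ?_
    by_cases hmx : latN u x ≤ m
    · have hk : k ≤ K₁ := hx ▸ Nat.log_mono_right hmx
      have h2k : ((2:ℝ)^k) ≤ (latN u x : ℝ) := by
        have := Nat.pow_log_le_self 2 (Nat.one_le_iff_ne_zero.mp (one_le_latN u x))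
        rw [hx] at this
        exact_mod_cast this
      have hb : (latN u x : ℝ) ^ (-e) ≤ ((2:ℝ)^k) ^ (-e) :=
        Real.rpow_le_rpow_of_nonpos (by positivity) h2k (by linarith)
      simp only [hg, hM, if_pos hmx, if_pos hk]
      exact ENNReal.ofReal_le_ofReal hb
    · simp only [hg, if_neg hmx, ENNReal.ofReal_zero]
      exact zero_le
  set h : ℕ → ℝ :=
    fun k => (2:ℝ)^((k+3)*d) * (if k ≤ K₁ then ((2:ℝ)^k) ^ (-e) else 0) with hh
  have step2 : ∀ k, (2:ℝ≥0∞) ^ ((k+3)*d) * M k = ENNReal.ofReal (h k) := by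
    intro k
    rw [hh, hM]
    simp only []
    rw [ENNReal.ofReal_mul (by positivity), pow_cast_ofReal]
  have step3 : ∑' k : ℕ, (2:ℝ≥0∞) ^ ((k+3)*d) * M k
      ≤ ENNReal.ofReal ((2:ℝ)^(3*d) * (2:ℝ)^((d:ℝ)) * (q-1)⁻¹ * (m:ℝ)^((d:ℝ)-e)) := by
    simp only [step2]
    rw [tsum_eq_sum (s := Finset.range (K₁+1)) (by
      intro k hk
      have hnk : ¬ k ≤ K₁ := by
        simp only [Finset.mem_range] at hk; omega
      simp only [hh, if_neg hnk, mul_zero, ENNReal.ofReal_zero])]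
    rw [← ENNReal.ofReal_sum_of_nonneg (fun k _ => by positivity)]
    apply ENNReal.ofReal_le_ofReal
    have hsum : ∑ k ∈ Finset.range (K₁+1), h k
        = (2:ℝ)^(3*d) * ((q^(K₁+1) - 1) / (q - 1)) := by
      rw [← geom_sum_eq hq1.ne' (K₁+1), Finset.mul_sum]
      refine Finset.sum_congr rfl fun k hk => ?_
      have hk' : k ≤ K₁ := by simp only [Finset.mem_range] at hk; omega
      rw [hh]
      simp only [if_pos hk']
      rw [exp_rw, hq]
    rw [hsum]
    have hqK : q^(K₁+1) ≤ (2:ℝ)^((d:ℝ)) * (m:ℝ)^((d:ℝ)-e) := by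
      have h2K : ((2:ℝ)^(K₁+1)) ≤ 2 * (m:ℝ) := by
        have := Nat.pow_log_le_self 2 (Nat.one_le_iff_ne_zero.mp hm)
        rw [← hK₁] at this
        have h2 : ((2:ℝ)^K₁) ≤ (m:ℝ) := by exact_mod_cast this
        rw [pow_succ]
        linarith
      calc q^(K₁+1) = ((2:ℝ)^(K₁+1)) ^ ((d:ℝ) - e) := by
            rw [hq, ← Real.rpow_natCast ((2:ℝ) ^ ((d:ℝ) - e)) (K₁+1),
              ← Real.rpow_natCast 2 (K₁+1), ← Real.rpow_mul (by norm_num : (0:ℝ) ≤ 2),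
              ← Real.rpow_mul (by norm_num : (0:ℝ) ≤ 2), mul_comm]
        _ ≤ ((2:ℝ) * (m:ℝ)) ^ ((d:ℝ) - e) :=
            Real.rpow_le_rpow (by positivity) h2K (by linarith)
        _ = (2:ℝ)^((d:ℝ)-e) * (m:ℝ)^((d:ℝ)-e) :=
            Real.mul_rpow (by norm_num) (by positivity)
        _ ≤ (2:ℝ)^((d:ℝ)) * (m:ℝ)^((d:ℝ)-e) := by
            refine mul_le_mul_of_nonneg_right ?_ (by positivity)
            exact Real.rpow_le_rpow_of_exponent_le (by norm_num) (by linarith)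
    have hdiv : (q^(K₁+1) - 1) / (q - 1) ≤ q^(K₁+1) * (q-1)⁻¹ := by
      rw [div_eq_mul_inv]
      refine mul_le_mul_of_nonneg_right (by linarith) (inv_nonneg.mpr (by linarith))
    calc (2:ℝ)^(3*d) * ((q^(K₁+1) - 1) / (q - 1))
        ≤ (2:ℝ)^(3*d) * (q^(K₁+1) * (q-1)⁻¹) :=
          mul_le_mul_of_nonneg_left hdiv (by positivity)
      _ ≤ (2:ℝ)^(3*d) * (((2:ℝ)^((d:ℝ)) * (m:ℝ)^((d:ℝ)-e)) * (q-1)⁻¹) := by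
          refine mul_le_mul_of_nonneg_left
            (mul_le_mul_of_nonneg_right hqK (inv_nonneg.mpr (by linarith))) (by positivity)
      _ = (2:ℝ)^(3*d) * (2:ℝ)^((d:ℝ)) * (q-1)⁻¹ * (m:ℝ)^((d:ℝ)-e) := by ring
  exact le_trans step1 step3

end S3

namespace S3

variable {d : ℕ}

lemma point_split (α β a b r : ℝ) (hα : 0 ≤ α) (hβ : 0 ≤ β)
    (ha : 1 ≤ a) (hb : 1 ≤ b) (hr : 1 ≤ r) (htri : r + 1 ≤ a + b) :
    a^(-α) * b^(-β) ≤ (2:ℝ)^β * r^(-β) * (if a ≤ r then a^(-α) else 0)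
      + (2:ℝ)^α * r^(-α) * (if b ≤ r then b^(-β) else 0)
      + (if r ≤ 2*a then a^(-(α+β)) else 0)
      + (if r ≤ 2*b then b^(-(α+β)) else 0) := by
  have h0a : (0:ℝ) < a := by linarith
  have h0b : (0:ℝ) < b := by linarith
  have h0r : (0:ℝ) < r := by linarith
  have t1 : (0:ℝ) ≤ (2:ℝ)^β * r^(-β) * (if a ≤ r then a^(-α) else 0) := by
    refine mul_nonneg (by positivity) ?_
    split_ifs <;> positivity
  have t2 : (0:ℝ) ≤ (2:ℝ)^α * r^(-α) * (if b ≤ r then b^(-β) else 0) := by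
    refine mul_nonneg (by positivity) ?_
    split_ifs <;> positivity
  have t3 : (0:ℝ) ≤ (if r ≤ 2*a then a^(-(α+β)) else 0) := by
    split_ifs <;> positivity
  have t4 : (0:ℝ) ≤ (if r ≤ 2*b then b^(-(α+β)) else 0) := by
    split_ifs <;> positivity
  have hhalf : ∀ t : ℝ, 0 ≤ t → (r/2)^(-t) = 2^t * r^(-t) := by
    intro t ht
    rw [Real.div_rpow h0r.le (by norm_num : (0:ℝ) ≤ 2), div_eq_mul_inv,
      Real.rpow_neg (by norm_num : (0:ℝ) ≤ 2), inv_inv]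
    ring
  rcases le_or_gt (2*a) r with hca | hca
  · have har : a ≤ r := by linarith
    have hbr2 : r/2 ≤ b := by linarith
    have hbb : b^(-β) ≤ (r/2)^(-β) :=
      Real.rpow_le_rpow_of_nonpos (by linarith) hbr2 (by linarith)
    rw [hhalf β hβ] at hbb
    have key : a^(-α) * b^(-β) ≤ (2:ℝ)^β * r^(-β) * (if a ≤ r then a^(-α) else 0) := by
      rw [if_pos har]
      calc a^(-α) * b^(-β) ≤ a^(-α) * ((2:ℝ)^β * r^(-β)) :=
            mul_le_mul_of_nonneg_left hbb (by positivity)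
        _ = _ := by ring
    linarith
  · rcases le_or_gt (2*b) r with hcb | hcb
    · have hbr : b ≤ r := by linarith
      have har2 : r/2 ≤ a := by linarith
      have haa : a^(-α) ≤ (r/2)^(-α) :=
        Real.rpow_le_rpow_of_nonpos (by linarith) har2 (by linarith)
      rw [hhalf α hα] at haa
      have key : a^(-α) * b^(-β) ≤ (2:ℝ)^α * r^(-α) * (if b ≤ r then b^(-β) else 0) := by
        rw [if_pos hbr]
        calc a^(-α) * b^(-β) ≤ ((2:ℝ)^α * r^(-α)) * b^(-β) :=
              mul_le_mul_of_nonneg_right haa (by positivity)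
          _ = _ := by ring
      linarith
    · rcases le_total a b with hab | hab
      · have key : a^(-α) * b^(-β) ≤ (if r ≤ 2*a then a^(-(α+β)) else 0) := by
          rw [if_pos hca.le]
          have hba : b^(-β) ≤ a^(-β) :=
            Real.rpow_le_rpow_of_nonpos h0a hab (by linarith)
          calc a^(-α) * b^(-β) ≤ a^(-α) * a^(-β) :=
                mul_le_mul_of_nonneg_left hba (by positivity)
            _ = a^(-(α+β)) := by rw [← Real.rpow_add h0a]; ring_nf
        linarith
      · have key : a^(-α) * b^(-β) ≤ (if r ≤ 2*b then b^(-(α+β)) else 0) := by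
          rw [if_pos hcb.le]
          have hba : a^(-α) ≤ b^(-α) :=
            Real.rpow_le_rpow_of_nonpos h0b hab (by linarith)
          calc a^(-α) * b^(-β) ≤ b^(-α) * b^(-β) :=
                mul_le_mul_of_nonneg_right hba (by positivity)
            _ = b^(-(α+β)) := by rw [← Real.rpow_add h0b]; ring_nf
        linarith

end S3

namespace S3

theorem main {d : ℕ} (α β : ℝ) (hα : α ∈ Set.Ico (0 : ℝ) d) (hβ : β ∈ Set.Ico (0 : ℝ) d)
    (hαβ : (d : ℝ) < α + β) :
    ∃ c C : ℝ, 0 < c ∧ 0 < C ∧ ∀ v w : Zd d,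
      c * br v w ^ (-(α + β - d)) ≤ (∑' x : Zd d, br v x ^ (-α) * br x w ^ (-β)) ∧
      (∑' x : Zd d, br v x ^ (-α) * br x w ^ (-β)) ≤ C * br v w ^ (-(α + β - d)) := by
  obtain ⟨hα0, hαd⟩ := hα
  obtain ⟨hβ0, hβd⟩ := hβ
  have hd0 : (0:ℝ) < d := lt_of_le_of_lt hα0 hαd
  have hd1 : 1 ≤ d := by exact_mod_cast Nat.cast_pos.mp hd0
  have hs0 : 0 ≤ α + β := by linarith
  obtain ⟨C₁, hC₁, hball₁⟩ := ballsum (d := d) α hα0 hαd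
  obtain ⟨C₂, hC₂, hball₂⟩ := ballsum (d := d) β hβ0 hβd
  obtain ⟨C₃, hC₃, htail⟩ := tailsum (d := d) (α + β) hαβ
  have h2d : (0:ℝ) < 2 * d := by linarith
  refine ⟨(1/(2*(d:ℝ)))^d * 2^(-α) * 3^(-β),
    2^β * C₁ + 2^α * C₂ + 2^(α+β) * C₃ + 2^(α+β) * C₃, by positivity, by positivity,
    fun v w => ?_⟩
  set n0 : ℕ := latN v w with hn0
  have hn01 : 1 ≤ n0 := one_le_latN v w
  have hr1 : (1:ℝ) ≤ (n0:ℝ) := by exact_mod_cast hn01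
  have hr0 : (0:ℝ) < (n0:ℝ) := by linarith
  set m0 : ℕ := (n0+1)/2 with hm0
  have hm01 : 1 ≤ m0 := by omega
  have hbrvw : br v w = (n0:ℝ) := br_eq v w
  set f : Zd d → ℝ := fun x => (latN v x:ℝ)^(-α) * (latN w x:ℝ)^(-β) with hf
  have hfeq : ∀ x, br v x ^ (-α) * br x w ^ (-β) = f x := by
    intro x
    rw [hf]
    simp only []
    rw [br_eq v x, br_symm, br_eq w x]
  have hfnn : ∀ x, 0 ≤ f x := fun x => by
    rw [hf]; exact mul_nonneg (Real.rpow_nonneg (Nat.cast_nonneg _) _)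
      (Real.rpow_nonneg (Nat.cast_nonneg _) _)
  set F : Zd d → ℝ≥0∞ := fun x => ENNReal.ofReal (f x) with hF
  set T1 : Zd d → ℝ≥0∞ := fun x =>
    ENNReal.ofReal ((2:ℝ)^β * (n0:ℝ)^(-β) * (if latN v x ≤ n0 then (latN v x:ℝ)^(-α) else 0))
    with hT1
  set T2 : Zd d → ℝ≥0∞ := fun x =>
    ENNReal.ofReal ((2:ℝ)^α * (n0:ℝ)^(-α) * (if latN w x ≤ n0 then (latN w x:ℝ)^(-β) else 0))
    with hT2
  set T3 : Zd d → ℝ≥0∞ := fun x =>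
    ENNReal.ofReal (if m0 ≤ latN v x then (latN v x:ℝ)^(-(α+β)) else 0) with hT3
  set T4 : Zd d → ℝ≥0∞ := fun x =>
    ENNReal.ofReal (if m0 ≤ latN w x then (latN w x:ℝ)^(-(α+β)) else 0) with hT4
  -- pointwise bound
  have hpoint : ∀ x, F x ≤ T1 x + T2 x + T3 x + T4 x := by
    intro x
    have ha1 : (1:ℝ) ≤ (latN v x:ℝ) := by exact_mod_cast one_le_latN v x
    have hb1 : (1:ℝ) ≤ (latN w x:ℝ) := by exact_mod_cast one_le_latN w x
    have htri : (n0:ℝ) + 1 ≤ (latN v x:ℝ) + (latN w x:ℝ) := by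
      have h := latN_triangle v w x
      rw [latN_symm x w] at h
      exact_mod_cast h
    have hps := point_split α β (latN v x:ℝ) (latN w x:ℝ) (n0:ℝ) hα0 hβ0 ha1 hb1 hr1 htri
    have c1 : (if (latN v x:ℝ) ≤ (n0:ℝ) then (latN v x:ℝ)^(-α) else 0)
        = (if latN v x ≤ n0 then (latN v x:ℝ)^(-α) else 0) :=
      if_congr (by exact_mod_cast Iff.rfl) rfl rfl
    have c2 : (if (latN w x:ℝ) ≤ (n0:ℝ) then (latN w x:ℝ)^(-β) else 0)
        = (if latN w x ≤ n0 then (latN w x:ℝ)^(-β) else 0) :=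
      if_congr (by exact_mod_cast Iff.rfl) rfl rfl
    have c3 : (if (n0:ℝ) ≤ 2*(latN v x:ℝ) then (latN v x:ℝ)^(-(α+β)) else 0)
        = (if m0 ≤ latN v x then (latN v x:ℝ)^(-(α+β)) else 0) := by
      refine if_congr ?_ rfl rfl
      constructor
      · intro h
        have h' : (n0:ℝ) ≤ ((2 * latN v x : ℕ):ℝ) := by push_cast; linarith
        have := Nat.cast_le.mp h'
        omega
      · intro h
        have h' : n0 ≤ 2 * latN v x := by omega
        have := (Nat.cast_le (α := ℝ)).mpr h'
        push_cast at this
        linarith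
    have c4 : (if (n0:ℝ) ≤ 2*(latN w x:ℝ) then (latN w x:ℝ)^(-(α+β)) else 0)
        = (if m0 ≤ latN w x then (latN w x:ℝ)^(-(α+β)) else 0) := by
      refine if_congr ?_ rfl rfl
      constructor
      · intro h
        have h' : (n0:ℝ) ≤ ((2 * latN w x : ℕ):ℝ) := by push_cast; linarith
        have := Nat.cast_le.mp h'
        omega
      · intro h
        have h' : n0 ≤ 2 * latN w x := by omega
        have := (Nat.cast_le (α := ℝ)).mpr h'
        push_cast at this
        linarith
    rw [c1, c2, c3, c4] at hps
    calc F x ≤ ENNReal.ofReal ((2:ℝ)^β * (n0:ℝ)^(-β) * (if latN v x ≤ n0 then (latN v x:ℝ)^(-α) else 0)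
        + (2:ℝ)^α * (n0:ℝ)^(-α) * (if latN w x ≤ n0 then (latN w x:ℝ)^(-β) else 0)
        + (if m0 ≤ latN v x then (latN v x:ℝ)^(-(α+β)) else 0)
        + (if m0 ≤ latN w x then (latN w x:ℝ)^(-(α+β)) else 0)) := ENNReal.ofReal_le_ofReal hps
      _ ≤ T1 x + T2 x + T3 x + T4 x := by
          rw [hT1, hT2, hT3, hT4]
          simp only []
          calc ENNReal.ofReal (_ + _ + _ + _)
              ≤ ENNReal.ofReal (_ + _ + _) + ENNReal.ofReal _ := ENNReal.ofReal_add_le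
            _ ≤ ENNReal.ofReal (_ + _) + ENNReal.ofReal _ + ENNReal.ofReal _ :=
                add_le_add_left ENNReal.ofReal_add_le _
            _ ≤ ENNReal.ofReal _ + ENNReal.ofReal _ + ENNReal.ofReal _ + ENNReal.ofReal _ :=
                add_le_add_left (add_le_add_left ENNReal.ofReal_add_le _) _
  -- sums of the four pieces
  have hA1 : (0:ℝ) < 2^β * C₁ := mul_pos (Real.rpow_pos_of_pos two_pos _) hC₁
  have hA2 : (0:ℝ) < 2^α * C₂ := mul_pos (Real.rpow_pos_of_pos two_pos _) hC₂
  have hA3 : (0:ℝ) < 2^(α+β) * C₃ := mul_pos (Real.rpow_pos_of_pos two_pos _) hC₃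
  have hrpnn : (0:ℝ) ≤ (n0:ℝ)^((d:ℝ)-(α+β)) := Real.rpow_nonneg hr0.le _
  have hsum1 : ∑' x, T1 x ≤ ENNReal.ofReal ((2^β * C₁) * (n0:ℝ)^((d:ℝ)-(α+β))) := by
    have hcoef : (0:ℝ) ≤ (2:ℝ)^β * (n0:ℝ)^(-β) := by positivity
    have hsplit : ∀ x, T1 x = ENNReal.ofReal ((2:ℝ)^β * (n0:ℝ)^(-β)) *
        ENNReal.ofReal (if latN v x ≤ n0 then (latN v x:ℝ)^(-α) else 0) := by
      intro x
      rw [hT1]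
      exact ENNReal.ofReal_mul hcoef
    rw [tsum_congr hsplit, ENNReal.tsum_mul_left]
    calc _ ≤ ENNReal.ofReal ((2:ℝ)^β * (n0:ℝ)^(-β)) * ENNReal.ofReal (C₁ * (n0:ℝ)^((d:ℝ)-α)) :=
          mul_le_mul_right (hball₁ v n0 hn01) _
      _ = ENNReal.ofReal ((2:ℝ)^β * (n0:ℝ)^(-β) * (C₁ * (n0:ℝ)^((d:ℝ)-α))) :=
          (ENNReal.ofReal_mul hcoef).symm
      _ = ENNReal.ofReal ((2^β * C₁) * (n0:ℝ)^((d:ℝ)-(α+β))) := by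
          congr 1
          have hpw : (n0:ℝ)^(-β) * (n0:ℝ)^((d:ℝ)-α) = (n0:ℝ)^((d:ℝ)-(α+β)) := by
            rw [← Real.rpow_add hr0]; congr 1; ring
          calc (2:ℝ)^β * (n0:ℝ)^(-β) * (C₁ * (n0:ℝ)^((d:ℝ)-α))
              = (2^β * C₁) * ((n0:ℝ)^(-β) * (n0:ℝ)^((d:ℝ)-α)) := by ring
            _ = _ := by rw [hpw]
  have hsum2 : ∑' x, T2 x ≤ ENNReal.ofReal ((2^α * C₂) * (n0:ℝ)^((d:ℝ)-(α+β))) := by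
    have hcoef : (0:ℝ) ≤ (2:ℝ)^α * (n0:ℝ)^(-α) := by positivity
    have hsplit : ∀ x, T2 x = ENNReal.ofReal ((2:ℝ)^α * (n0:ℝ)^(-α)) *
        ENNReal.ofReal (if latN w x ≤ n0 then (latN w x:ℝ)^(-β) else 0) := by
      intro x
      rw [hT2]
      exact ENNReal.ofReal_mul hcoef
    rw [tsum_congr hsplit, ENNReal.tsum_mul_left]
    calc _ ≤ ENNReal.ofReal ((2:ℝ)^α * (n0:ℝ)^(-α)) * ENNReal.ofReal (C₂ * (n0:ℝ)^((d:ℝ)-β)) :=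
          mul_le_mul_right (hball₂ w n0 hn01) _
      _ = ENNReal.ofReal ((2:ℝ)^α * (n0:ℝ)^(-α) * (C₂ * (n0:ℝ)^((d:ℝ)-β))) :=
          (ENNReal.ofReal_mul hcoef).symm
      _ = ENNReal.ofReal ((2^α * C₂) * (n0:ℝ)^((d:ℝ)-(α+β))) := by
          congr 1
          have hpw : (n0:ℝ)^(-α) * (n0:ℝ)^((d:ℝ)-β) = (n0:ℝ)^((d:ℝ)-(α+β)) := by
            rw [← Real.rpow_add hr0]; congr 1; ring
          calc (2:ℝ)^α * (n0:ℝ)^(-α) * (C₂ * (n0:ℝ)^((d:ℝ)-β))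
              = (2^α * C₂) * ((n0:ℝ)^(-α) * (n0:ℝ)^((d:ℝ)-β)) := by ring
            _ = _ := by rw [hpw]
  have hm0bound : C₃ * (m0:ℝ)^((d:ℝ)-(α+β)) ≤ (2^(α+β) * C₃) * (n0:ℝ)^((d:ℝ)-(α+β)) := by
    have hm0ge : (n0:ℝ)/2 ≤ (m0:ℝ) := by
      have h' : n0 ≤ 2 * m0 := by omega
      have h'' := (Nat.cast_le (α := ℝ)).mpr h'
      push_cast at h''
      linarith
    have hm0pos : (0:ℝ) < (n0:ℝ)/2 := by linarith
    have h1 : (m0:ℝ)^((d:ℝ)-(α+β)) ≤ ((n0:ℝ)/2)^((d:ℝ)-(α+β)) :=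
      Real.rpow_le_rpow_of_nonpos hm0pos hm0ge (by linarith)
    have h2 : ((n0:ℝ)/2)^((d:ℝ)-(α+β)) = (n0:ℝ)^((d:ℝ)-(α+β)) * (2:ℝ)^((α+β)-(d:ℝ)) := by
      rw [Real.div_rpow hr0.le (by norm_num), div_eq_mul_inv,
        ← Real.rpow_neg (by norm_num : (0:ℝ) ≤ 2), neg_sub]
    have h3 : (2:ℝ)^((α+β)-(d:ℝ)) ≤ (2:ℝ)^(α+β) :=
      Real.rpow_le_rpow_of_exponent_le (by norm_num) (by linarith)
    have h4 : (m0:ℝ)^((d:ℝ)-(α+β)) ≤ (n0:ℝ)^((d:ℝ)-(α+β)) * 2^(α+β) := by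
      refine le_trans h1 ?_
      rw [h2]
      exact mul_le_mul_of_nonneg_left h3 hrpnn
    calc C₃ * (m0:ℝ)^((d:ℝ)-(α+β)) ≤ C₃ * ((n0:ℝ)^((d:ℝ)-(α+β)) * 2^(α+β)) :=
          mul_le_mul_of_nonneg_left h4 hC₃.le
      _ = (2^(α+β) * C₃) * (n0:ℝ)^((d:ℝ)-(α+β)) := by ring
  have hsum3 : ∑' x, T3 x ≤ ENNReal.ofReal ((2^(α+β) * C₃) * (n0:ℝ)^((d:ℝ)-(α+β))) :=
    le_trans (htail v m0 hm01) (ENNReal.ofReal_le_ofReal hm0bound)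
  have hsum4 : ∑' x, T4 x ≤ ENNReal.ofReal ((2^(α+β) * C₃) * (n0:ℝ)^((d:ℝ)-(α+β))) :=
    le_trans (htail w m0 hm01) (ENNReal.ofReal_le_ofReal hm0bound)
  have hFle : ∑' x, F x ≤ ENNReal.ofReal
      ((2^β * C₁ + 2^α * C₂ + 2^(α+β) * C₃ + 2^(α+β) * C₃) * (n0:ℝ)^((d:ℝ)-(α+β))) := by
    calc ∑' x, F x ≤ ∑' x, (T1 x + T2 x + T3 x + T4 x) := ENNReal.tsum_le_tsum hpoint
      _ = ((∑' x, T1 x + ∑' x, T2 x) + ∑' x, T3 x) + ∑' x, T4 x := by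
          rw [ENNReal.tsum_add, ENNReal.tsum_add, ENNReal.tsum_add]
      _ ≤ ((ENNReal.ofReal ((2^β * C₁) * (n0:ℝ)^((d:ℝ)-(α+β)))
            + ENNReal.ofReal ((2^α * C₂) * (n0:ℝ)^((d:ℝ)-(α+β))))
            + ENNReal.ofReal ((2^(α+β) * C₃) * (n0:ℝ)^((d:ℝ)-(α+β))))
            + ENNReal.ofReal ((2^(α+β) * C₃) * (n0:ℝ)^((d:ℝ)-(α+β))) :=
          add_le_add (add_le_add (add_le_add hsum1 hsum2) hsum3) hsum4
      _ = ENNReal.ofReal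
          ((2^β * C₁ + 2^α * C₂ + 2^(α+β) * C₃ + 2^(α+β) * C₃) * (n0:ℝ)^((d:ℝ)-(α+β))) := by
          rw [← ENNReal.ofReal_add (mul_nonneg hA1.le hrpnn) (mul_nonneg hA2.le hrpnn),
            ← ENNReal.ofReal_add (add_nonneg (mul_nonneg hA1.le hrpnn) (mul_nonneg hA2.le hrpnn))
              (mul_nonneg hA3.le hrpnn),
            ← ENNReal.ofReal_add
              (add_nonneg (add_nonneg (mul_nonneg hA1.le hrpnn) (mul_nonneg hA2.le hrpnn))
                (mul_nonneg hA3.le hrpnn)) (mul_nonneg hA3.le hrpnn)]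
          congr 1
          ring
  have hFne : ∑' x, F x ≠ ⊤ := ne_top_of_le_ne_top ENNReal.ofReal_ne_top hFle
  have hsummable : Summable f := by
    have h2 : Summable (fun x => (f x).toNNReal) := by
      rw [← ENNReal.tsum_coe_ne_top_iff_summable]
      exact hFne
    exact (NNReal.summable_coe.mpr h2).congr (fun x => Real.coe_toNNReal _ (hfnn x))
  have htsumeq : ∑' x, f x = (∑' x, F x).toReal := by
    rw [ENNReal.tsum_toReal_eq (fun _ => ENNReal.ofReal_ne_top)]
    exact tsum_congr fun x => (ENNReal.toReal_ofReal (hfnn x)).symm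
  constructor
  · -- lower bound
    rw [tsum_congr hfeq, hbrvw, neg_sub]
    set m : ℕ := n0 / d with hm
    have hQa : ∀ x ∈ box v m, latN v x ≤ 2*n0 := by
      intro x hx
      rw [box, Fintype.mem_piFinset] at hx
      have hco : ∀ i, (x i - v i).natAbs ≤ m := fun i => by
        have h := hx i; rw [Finset.mem_Icc] at h; omega
      have hsum : ∑ i, (x i - v i).natAbs ≤ d * m := by
        calc ∑ i, (x i - v i).natAbs ≤ ∑ _i : Fin d, m := Finset.sum_le_sum fun i _ => hco i
          _ = d * m := by rw [Finset.sum_const, Finset.card_univ, Fintype.card_fin, smul_eq_mul]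
      have hdm : d * m ≤ n0 := by
        calc d * m = m * d := Nat.mul_comm d m
          _ ≤ n0 := by rw [hm]; exact Nat.div_mul_le_self n0 d
      unfold latN
      omega
    have hQb : ∀ x ∈ box v m, latN w x ≤ 3*n0 := by
      intro x hx
      have h := latN_triangle w x v
      have hwv : latN w v = n0 := by rw [latN_symm w v]
      have h2 := hQa x hx
      omega
    have hterm : ∀ x ∈ box v m, (2*(n0:ℝ))^(-α) * (3*(n0:ℝ))^(-β) ≤ f x := by
      intro x hx
      have ha' := hQa x hx
      have hb' := hQb x hx
      have h1 : (latN v x:ℝ) ≤ 2*(n0:ℝ) := by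
        have := (Nat.cast_le (α := ℝ)).mpr ha'
        push_cast at this
        linarith
      have h2 : (latN w x:ℝ) ≤ 3*(n0:ℝ) := by
        have := (Nat.cast_le (α := ℝ)).mpr hb'
        push_cast at this
        linarith
      have hva : (0:ℝ) < (latN v x:ℝ) := by exact_mod_cast latN_pos v x
      have hwa : (0:ℝ) < (latN w x:ℝ) := by exact_mod_cast latN_pos w x
      rw [hf]
      exact mul_le_mul (Real.rpow_le_rpow_of_nonpos hva h1 (by linarith))
        (Real.rpow_le_rpow_of_nonpos hwa h2 (by linarith))
        (by positivity) (Real.rpow_nonneg hva.le _)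
    have hcardsum : ((box v m).card : ℝ) * ((2*(n0:ℝ))^(-α) * (3*(n0:ℝ))^(-β))
        ≤ ∑ x ∈ box v m, f x := by
      have h := Finset.card_nsmul_le_sum (box v m) f _ hterm
      rwa [nsmul_eq_mul] at h
    have hQtsum : ∑ x ∈ box v m, f x ≤ ∑' x, f x :=
      Summable.sum_le_tsum _ (fun x _ => hfnn x) hsummable
    have hnat : n0 ≤ 2*d*(2*m+1) := by
      have h1 : n0 < (m+1)*d := by
        have h0 : n0 / d < m + 1 := by rw [hm]; exact Nat.lt_succ_self _
        exact (Nat.div_lt_iff_lt_mul (by omega : 0 < d)).mp h0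
      nlinarith
    have hdivle : (n0:ℝ)/(2*(d:ℝ)) ≤ 2*(m:ℝ)+1 := by
      rw [div_le_iff₀ h2d]
      have h2 := (Nat.cast_le (α := ℝ)).mpr hnat
      push_cast at h2
      linarith
    have hcard : ((n0:ℝ)/(2*(d:ℝ)))^d ≤ ((box v m).card : ℝ) := by
      rw [card_box]
      push_cast
      exact pow_le_pow_left₀ (by positivity) hdivle d
    have hkey : (1/(2*(d:ℝ)))^d * 2^(-α) * 3^(-β) * (n0:ℝ)^((d:ℝ)-(α+β))
        = ((n0:ℝ)/(2*(d:ℝ)))^d * ((2*(n0:ℝ))^(-α) * (3*(n0:ℝ))^(-β)) := by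
      rw [Real.mul_rpow (by norm_num) hr0.le, Real.mul_rpow (by norm_num) hr0.le,
        div_pow, div_pow, one_pow]
      rw [← Real.rpow_natCast (n0:ℝ) d]
      rw [show (d:ℝ)-(α+β) = (d:ℝ) + (-α + -β) by ring,
        Real.rpow_add hr0, Real.rpow_add hr0]
      field_simp
    calc (1/(2*(d:ℝ)))^d * 2^(-α) * 3^(-β) * (n0:ℝ)^((d:ℝ)-(α+β))
        = ((n0:ℝ)/(2*(d:ℝ)))^d * ((2*(n0:ℝ))^(-α) * (3*(n0:ℝ))^(-β)) := hkey
      _ ≤ ((box v m).card : ℝ) * ((2*(n0:ℝ))^(-α) * (3*(n0:ℝ))^(-β)) :=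
          mul_le_mul_of_nonneg_right hcard (by positivity)
      _ ≤ ∑ x ∈ box v m, f x := hcardsum
      _ ≤ ∑' x, f x := hQtsum
  · -- upper bound
    rw [tsum_congr hfeq, htsumeq, hbrvw, neg_sub]
    have hAnn : (0:ℝ) ≤ (2^β * C₁ + 2^α * C₂ + 2^(α+β) * C₃ + 2^(α+β) * C₃)
        * (n0:ℝ)^((d:ℝ)-(α+β)) :=
      mul_nonneg (by linarith) hrpnn
    calc (∑' x, F x).toReal
        ≤ (ENNReal.ofReal ((2^β * C₁ + 2^α * C₂ + 2^(α+β) * C₃ + 2^(α+β) * C₃)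
            * (n0:ℝ)^((d:ℝ)-(α+β)))).toReal := by
          exact ENNReal.toReal_mono ENNReal.ofReal_ne_top hFle
      _ = (2^β * C₁ + 2^α * C₂ + 2^(α+β) * C₃ + 2^(α+β) * C₃) * (n0:ℝ)^((d:ℝ)-(α+β)) :=
          ENNReal.toReal_ofReal hAnn

end S3


theorem statement3 {d : ℕ} (α β : ℝ) (hα : α ∈ Set.Ico (0 : ℝ) d) (hβ : β ∈ Set.Ico (0 : ℝ) d)
    (hαβ : (d : ℝ) < α + β) :
    ∃ c C : ℝ, 0 < c ∧ 0 < C ∧ ∀ v w : Zd d,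
      c * br v w ^ (-(α + β - d)) ≤ (∑' x : Zd d, br v x ^ (-α) * br x w ^ (-β)) ∧
      (∑' x : Zd d, br v x ^ (-α) * br x w ^ (-β)) ≤ C * br v w ^ (-(α + β - d)) :=
  S3.main α β hα hβ hαβ
end

section
/- Let α,β ∈ [0,d) with γ := α+β−d > 0. There is a constant C (depending on α,β,d) such that for all x,y,z ∈ Z^d, Σ_{a∈Z^d} ⟨ax⟩^{−α}·⟨ay⟩^{−β}·⟨az⟩^{−γ} ≤ C·⟨xyz⟩^{−γ}, where ⟨xyz⟩ = min{⟨xy⟩⟨yz⟩, ⟨yz⟩⟨zx⟩, ⟨zx⟩⟨xy⟩}. -/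
open MeasureTheory ProbabilityTheory Finset

set_option maxHeartbeats 1000000

namespace S5
open ENNReal

variable {d : ℕ}

def Nl (a : Zd d) : ℕ := ∑ i, (a i).natAbs

lemma Nl_neg (a : Zd d) : Nl (-a) = Nl a := by
  unfold Nl; congr 1; funext i; simp

lemma Nl_sub_symm (a b : Zd d) : Nl (a - b) = Nl (b - a) := by
  rw [← Nl_neg (a - b)]; congr 1; abel

lemma Nl_triangle (a b c : Zd d) : Nl (a - c) ≤ Nl (a - b) + Nl (b - c) := by
  unfold Nl
  rw [← Finset.sum_add_distrib]
  apply Finset.sum_le_sum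
  intro i _
  have : (a - c) i = (a - b) i + (b - c) i := by simp
  rw [this]
  exact Int.natAbs_add_le _ _

noncomputable def E (a b : Zd d) : ℝ≥0∞ := ((1 + Nl (a - b) : ℕ) : ℝ≥0∞)

lemma one_le_E (a b : Zd d) : 1 ≤ E a b := by
  unfold E; norm_cast; omega

lemma E_ne_zero (a b : Zd d) : E a b ≠ 0 := by
  intro h; have := one_le_E a b; rw [h] at this; simp at this

lemma E_ne_top (a b : Zd d) : E a b ≠ ⊤ := by
  unfold E; exact natCast_ne_top _

lemma E_symm (a b : Zd d) : E a b = E b a := by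
  unfold E; rw [Nl_sub_symm]

lemma E_triangle (a b c : Zd d) : E a c ≤ E a b + E b c := by
  unfold E
  norm_cast
  have := Nl_triangle a b c
  omega

noncomputable def box (n : ℕ) : Finset (Zd d) := Finset.Icc (fun _ => -(n:ℤ)) (fun _ => (n:ℤ))

lemma card_box (n : ℕ) : (box (d := d) n).card = (2*n+1)^d := by
  unfold box
  rw [Pi.card_Icc]
  have : ∀ i : Fin d, (Finset.Icc (-(n:ℤ)) n).card = 2*n+1 := by
    intro i; rw [Int.card_Icc]; omega
  rw [Finset.prod_congr rfl (fun i _ => this i), Finset.prod_const, Finset.card_univ,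
    Fintype.card_fin]

lemma mem_box (a : Zd d) (n : ℕ) (h : Nl a ≤ n) : a ∈ box (d := d) n := by
  unfold box
  rw [Finset.mem_Icc]
  have key : ∀ i, (a i).natAbs ≤ n := fun i =>
    le_trans (Finset.single_le_sum (f := fun i => (a i).natAbs) (by intros; positivity)
      (Finset.mem_univ i)) h
  have key2 : ∀ i, -(n:ℤ) ≤ a i ∧ a i ≤ n := by
    intro i
    have h1 := key i
    have h2 : |a i| ≤ (n:ℤ) := by
      rw [Int.abs_eq_natAbs]; exact_mod_cast h1
    exact abs_le.mp h2
  exact ⟨fun i => (key2 i).1, fun i => (key2 i).2⟩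

-- block membership: if Nat.log 2 (1 + Nl a) = j then a ∈ box (2^(j+1))
lemma mem_box_of_log (a : Zd d) (j : ℕ) (h : Nat.log 2 (1 + Nl a) = j) :
    a ∈ box (d := d) (2 ^ (j + 1)) := by
  apply mem_box
  have h1 : 1 + Nl a < 2 ^ (j + 1) := by
    have := Nat.lt_pow_succ_log_self (by norm_num : 1 < 2) (1 + Nl a)
    rwa [h] at this
  omega

-- master lemma
lemma master (f : Zd d → ℝ≥0∞) (g : ℕ → ℝ≥0∞)
    (h : ∀ a, f a ≤ g (Nat.log 2 (1 + Nl a))) :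
    ∑' a, f a ≤ ∑' j, ((2 * 2 ^ (j + 1) + 1) ^ d : ℕ) * g j := by
  have step1 : ∀ a, f a ≤ ∑' j, (if Nat.log 2 (1 + Nl a) = j then g j else 0) := by
    intro a
    rw [tsum_eq_single (Nat.log 2 (1 + Nl a)) (by intro b hb; simp [Ne.symm hb])]
    simpa using h a
  calc ∑' a, f a ≤ ∑' a, ∑' j, (if Nat.log 2 (1 + Nl a) = j then g j else 0) :=
        ENNReal.tsum_le_tsum step1
    _ = ∑' j, ∑' a : Zd d, (if Nat.log 2 (1 + Nl a) = j then g j else 0) :=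
        ENNReal.tsum_comm
    _ ≤ ∑' j, ((2 * 2 ^ (j + 1) + 1) ^ d : ℕ) * g j := by
        apply ENNReal.tsum_le_tsum
        intro j
        have hsupp : ∀ a : Zd d, a ∉ box (d := d) (2 ^ (j + 1)) →
            (if Nat.log 2 (1 + Nl a) = j then g j else 0) = 0 := by
          intro a ha
          rw [if_neg]
          intro hc
          exact ha (mem_box_of_log a j hc)
        rw [tsum_eq_sum hsupp]
        calc ∑ a ∈ box (d := d) (2 ^ (j + 1)), (if Nat.log 2 (1 + Nl a) = j then g j else 0)
            ≤ ∑ _a ∈ box (d := d) (2 ^ (j + 1)), g j := by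
              apply Finset.sum_le_sum; intro a _; split <;> simp
          _ = ((2 * 2 ^ (j + 1) + 1) ^ d : ℕ) * g j := by
              rw [Finset.sum_const, card_box, nsmul_eq_mul]

lemma rpow_anti {x y : ℝ≥0∞} (h : x ≤ y) {r : ℝ} (hr : r ≤ 0) : y ^ r ≤ x ^ r := by
  rw [← neg_neg r, ENNReal.rpow_neg x, ENNReal.rpow_neg y]
  exact ENNReal.inv_le_inv.2 (ENNReal.rpow_le_rpow h (neg_nonneg.2 hr))

lemma two_pow_rpow (j : ℕ) (r : ℝ) : ((2:ℝ≥0∞)^(j:ℕ)) ^ r = ((2:ℝ≥0∞)^r)^(j:ℕ) := by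
  rw [← ENNReal.rpow_natCast (2:ℝ≥0∞) j, ← ENNReal.rpow_mul,
    ← ENNReal.rpow_natCast ((2:ℝ≥0∞)^r) j, ← ENNReal.rpow_mul, mul_comm]

lemma two_pow_ne_zero (j : ℕ) : ((2:ℝ≥0∞)^(j:ℕ)) ≠ 0 := by positivity

lemma two_pow_ne_top (j : ℕ) : ((2:ℝ≥0∞)^(j:ℕ)) ≠ ⊤ := by
  exact pow_ne_top (by norm_num)

-- card bound as ℝ≥0∞
lemma card_bound (j : ℕ) :
    (((2 * 2 ^ (j + 1) + 1) ^ d : ℕ) : ℝ≥0∞) ≤ (8:ℝ≥0∞)^d * ((2:ℝ≥0∞)^(j:ℕ))^(d:ℝ) := by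
  have h1 : ((2 * 2 ^ (j + 1) + 1) ^ d : ℕ) ≤ ((2^(j+3))^d : ℕ) := by
    apply Nat.pow_le_pow_left
    have e1 : 2 * 2 ^ (j+1) = 2^(j+2) := by ring
    have e2 : 2^(j+3) = 2^(j+2) + 2^(j+2) := by ring
    have e3 : (1:ℕ) ≤ 2^(j+2) := Nat.one_le_two_pow
    omega
  calc (((2 * 2 ^ (j + 1) + 1) ^ d : ℕ) : ℝ≥0∞) ≤ (((2^(j+3))^d : ℕ) : ℝ≥0∞) := by
        exact_mod_cast h1
    _ = (8:ℝ≥0∞)^d * ((2:ℝ≥0∞)^(j:ℕ))^(d:ℝ) := by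
        rw [ENNReal.rpow_natCast]
        push_cast
        rw [pow_add]
        ring

lemma geom_onem_ne_top {r : ℝ≥0∞} (hr : r < 1) : (1 - r)⁻¹ ≠ ⊤ := by
  rw [Ne, ENNReal.inv_eq_top, tsub_eq_zero_iff_le]
  exact not_le.2 hr

lemma lemA {s : ℝ} (hs0 : 0 ≤ s) (hsd : s < d) :
    ∃ C : ℝ≥0∞, C ≠ ⊤ ∧ ∀ K : ℕ, 1 ≤ K →
      ∑' a : Zd d, (if 1 + Nl a ≤ K then ((1 + Nl a : ℕ) : ℝ≥0∞) ^ (-s) else 0)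
        ≤ C * (K : ℝ≥0∞) ^ ((d : ℝ) - s) := by
  set q : ℝ≥0∞ := (2:ℝ≥0∞) ^ ((d:ℝ) - s) with hq
  have hds : (0:ℝ) < (d:ℝ) - s := by linarith
  have hq1 : 1 < q := by
    rw [hq]
    exact ENNReal.one_lt_rpow (by norm_num) hds
  have hqne0 : q ≠ 0 := by positivity
  have hqnetop : q ≠ ⊤ := ENNReal.rpow_ne_top_of_nonneg hds.le (by norm_num)
  have hqi : q⁻¹ < 1 := by
    rw [ENNReal.inv_lt_one]; exact hq1
  refine ⟨(8:ℝ≥0∞)^d * (1 - q⁻¹)⁻¹, ?_, ?_⟩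
  · exact ENNReal.mul_ne_top (by simp [pow_ne_top]) (geom_onem_ne_top hqi)
  intro K hK
  set L := Nat.log 2 K with hL
  have key := master (d := d)
    (fun a => if 1 + Nl a ≤ K then ((1 + Nl a : ℕ) : ℝ≥0∞) ^ (-s) else 0)
    (fun j => if 2^j ≤ K then ((2:ℝ≥0∞)^(j:ℕ)) ^ (-s) else 0) ?_
  swap
  · intro a
    by_cases hca : 1 + Nl a ≤ K
    · rw [if_pos hca]
      have hlog : 2 ^ Nat.log 2 (1 + Nl a) ≤ 1 + Nl a := Nat.pow_log_le_self 2 (by omega)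
      rw [if_pos (le_trans hlog hca)]
      apply rpow_anti _ (by linarith : -s ≤ 0)
      exact_mod_cast hlog
    · rw [if_neg hca]; exact zero_le
  refine key.trans ?_
  have term_bound : ∀ j : ℕ,
      (((2 * 2 ^ (j + 1) + 1) ^ d : ℕ) : ℝ≥0∞) * (if 2^j ≤ K then ((2:ℝ≥0∞)^(j:ℕ)) ^ (-s) else 0)
        ≤ (8:ℝ≥0∞)^d * (if j ≤ L then q ^ j else 0) := by
    intro j
    by_cases hc : 2^j ≤ K
    · rw [if_pos hc, if_pos ((Nat.le_log_iff_pow_le (by norm_num) (by omega)).2 hc)]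
      calc (((2 * 2 ^ (j + 1) + 1) ^ d : ℕ) : ℝ≥0∞) * ((2:ℝ≥0∞)^(j:ℕ)) ^ (-s)
          ≤ ((8:ℝ≥0∞)^d * ((2:ℝ≥0∞)^(j:ℕ))^(d:ℝ)) * ((2:ℝ≥0∞)^(j:ℕ)) ^ (-s) :=
            mul_le_mul_left (card_bound j) _
        _ = (8:ℝ≥0∞)^d * q ^ j := by
            rw [mul_assoc, ← ENNReal.rpow_add _ _ (two_pow_ne_zero j) (two_pow_ne_top j)]
            congr 1
            rw [show (d:ℝ) + (-s) = (d:ℝ) - s by ring, two_pow_rpow]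
    · rw [if_neg hc, if_neg]
      · simp
      · intro hjL
        exact hc (le_trans (Nat.pow_le_pow_right (by norm_num) hjL) (Nat.pow_log_le_self 2 (by omega)))
  refine (ENNReal.tsum_le_tsum term_bound).trans ?_
  rw [ENNReal.tsum_mul_left]
  have hsum_ite : ∑' j : ℕ, (if j ≤ L then q ^ j else 0) ≤ q ^ L * (1 - q⁻¹)⁻¹ := by
    have hsupp : ∀ j ∉ Finset.range (L + 1), (if j ≤ L then q ^ j else 0) = 0 := by
      intro j hj
      rw [Finset.mem_range, not_lt] at hj
      rw [if_neg (by omega)]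
    rw [tsum_eq_sum hsupp]
    have hstep : ∀ j ∈ Finset.range (L + 1), (if j ≤ L then q ^ j else 0) ≤ q ^ L * (q⁻¹) ^ (L - j) := by
      intro j hj
      rw [Finset.mem_range] at hj
      have hjL : j ≤ L := by omega
      rw [if_pos hjL]
      have h1 : q ^ (L - j) * q ^ j = q ^ L := pow_sub_mul_pow q hjL
      have h2 : q ^ L * (q⁻¹) ^ (L - j) = q ^ j * (q ^ (L - j) * (q ^ (L - j))⁻¹) := by
        rw [← h1, ENNReal.inv_pow]; ring
      rw [h2, ENNReal.mul_inv_cancel (pow_ne_zero _ hqne0) (pow_ne_top hqnetop), mul_one]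
    calc ∑ j ∈ Finset.range (L + 1), (if j ≤ L then q ^ j else 0)
        ≤ ∑ j ∈ Finset.range (L + 1), q ^ L * (q⁻¹) ^ (L - j) :=
          Finset.sum_le_sum hstep
      _ = q ^ L * ∑ j ∈ Finset.range (L + 1), (q⁻¹) ^ (L - j) := by rw [Finset.mul_sum]
      _ = q ^ L * ∑ j ∈ Finset.range (L + 1), (q⁻¹) ^ j := by
          congr 1
          have := Finset.sum_range_reflect (fun j => (q⁻¹) ^ j) (L + 1)
          simpa using this
      _ ≤ q ^ L * ∑' j : ℕ, (q⁻¹) ^ j :=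
          mul_le_mul_right (ENNReal.sum_le_tsum _) _
      _ = q ^ L * (1 - q⁻¹)⁻¹ := by rw [ENNReal.tsum_geometric]
  have hqL : q ^ L ≤ (K : ℝ≥0∞) ^ ((d:ℝ) - s) := by
    have h2L : ((2:ℝ≥0∞) ^ (L:ℕ)) ≤ (K : ℝ≥0∞) := by
      have := Nat.pow_log_le_self 2 (show K ≠ 0 by omega)
      exact_mod_cast this
    calc q ^ L = ((2:ℝ≥0∞)^(L:ℕ)) ^ ((d:ℝ) - s) := (two_pow_rpow L _).symm
      _ ≤ (K : ℝ≥0∞) ^ ((d:ℝ) - s) := ENNReal.rpow_le_rpow h2L hds.le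
  calc (8:ℝ≥0∞)^d * ∑' j : ℕ, (if j ≤ L then q ^ j else 0)
      ≤ (8:ℝ≥0∞)^d * (q ^ L * (1 - q⁻¹)⁻¹) := mul_le_mul_right hsum_ite _
    _ ≤ (8:ℝ≥0∞)^d * ((K : ℝ≥0∞) ^ ((d:ℝ) - s) * (1 - q⁻¹)⁻¹) := by
        exact mul_le_mul_right (mul_le_mul_left hqL _) _
    _ = (8:ℝ≥0∞)^d * (1 - q⁻¹)⁻¹ * (K : ℝ≥0∞) ^ ((d:ℝ) - s) := by ring

lemma lemB {p : ℝ} (hp : (d:ℝ) < p) :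
    ∃ C : ℝ≥0∞, C ≠ ⊤ ∧ ∀ K : ℕ, 1 ≤ K →
      ∑' a : Zd d, (if K < 1 + Nl a then ((1 + Nl a : ℕ) : ℝ≥0∞) ^ (-p) else 0)
        ≤ C * (K : ℝ≥0∞) ^ ((d : ℝ) - p) := by
  set r : ℝ≥0∞ := (2:ℝ≥0∞) ^ ((d:ℝ) - p) with hr
  have hdp : (d:ℝ) - p < 0 := by linarith
  have hr1 : r < 1 := by
    rw [hr]
    exact ENNReal.rpow_lt_one_of_one_lt_of_neg (by norm_num) hdp
  have hrne0 : r ≠ 0 := (ENNReal.rpow_pos (by norm_num) (by norm_num)).ne'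
  have hrnetop : r ≠ ⊤ := hr1.trans_le le_top |>.ne
  refine ⟨(8:ℝ≥0∞)^d * ((2:ℝ≥0∞) ^ (p - (d:ℝ)) * (1 - r)⁻¹), ?_, ?_⟩
  · exact ENNReal.mul_ne_top (by simp [pow_ne_top])
      (ENNReal.mul_ne_top (ENNReal.rpow_ne_top_of_nonneg (by linarith) (by norm_num))
        (geom_onem_ne_top hr1))
  intro K hK
  set L := Nat.log 2 K with hL
  have key := master (d := d)
    (fun a => if K < 1 + Nl a then ((1 + Nl a : ℕ) : ℝ≥0∞) ^ (-p) else 0)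
    (fun j => if L ≤ j then ((2:ℝ≥0∞)^(j:ℕ)) ^ (-p) else 0) ?_
  swap
  · intro a
    by_cases hca : K < 1 + Nl a
    · rw [if_pos hca]
      have hlog : 2 ^ Nat.log 2 (1 + Nl a) ≤ 1 + Nl a := Nat.pow_log_le_self 2 (by omega)
      have hlog2 : L ≤ Nat.log 2 (1 + Nl a) := Nat.log_mono_right (by omega)
      rw [if_pos hlog2]
      apply rpow_anti _ (by linarith : -p ≤ 0)
      exact_mod_cast hlog
    · rw [if_neg hca]; exact zero_le
  refine key.trans ?_
  have term_bound : ∀ j : ℕ,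
      (((2 * 2 ^ (j + 1) + 1) ^ d : ℕ) : ℝ≥0∞) * (if L ≤ j then ((2:ℝ≥0∞)^(j:ℕ)) ^ (-p) else 0)
        ≤ (8:ℝ≥0∞)^d * (if L ≤ j then r ^ j else 0) := by
    intro j
    by_cases hc : L ≤ j
    · rw [if_pos hc, if_pos hc]
      calc (((2 * 2 ^ (j + 1) + 1) ^ d : ℕ) : ℝ≥0∞) * ((2:ℝ≥0∞)^(j:ℕ)) ^ (-p)
          ≤ ((8:ℝ≥0∞)^d * ((2:ℝ≥0∞)^(j:ℕ))^(d:ℝ)) * ((2:ℝ≥0∞)^(j:ℕ)) ^ (-p) :=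
            mul_le_mul_left (card_bound j) _
        _ = (8:ℝ≥0∞)^d * r ^ j := by
            rw [mul_assoc, ← ENNReal.rpow_add _ _ (two_pow_ne_zero j) (two_pow_ne_top j)]
            congr 1
            rw [show (d:ℝ) + (-p) = (d:ℝ) - p by ring, two_pow_rpow]
    · rw [if_neg hc, if_neg hc]; simp
  refine (ENNReal.tsum_le_tsum term_bound).trans ?_
  rw [ENNReal.tsum_mul_left]
  have hshift : ∑' j : ℕ, (if L ≤ j then r ^ j else 0) = ∑' i : ℕ, r ^ (L + i) := by
    have hinj : Function.Injective (fun i : ℕ => L + i) := fun a b h => by simpa using h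
    have hsupp : Function.support (fun j : ℕ => if L ≤ j then r ^ j else 0) ⊆
        Set.range (fun i : ℕ => L + i) := by
      intro j hj
      simp only [Function.mem_support] at hj
      by_cases hLj : L ≤ j
      · exact ⟨j - L, show L + (j - L) = j by omega⟩
      · exact absurd (if_neg hLj) hj
    rw [← Function.Injective.tsum_eq hinj hsupp]
    congr 1
    funext i
    rw [if_pos (by omega)]
  rw [hshift]
  have : ∑' i : ℕ, r ^ (L + i) = r ^ L * (1 - r)⁻¹ := by
    simp_rw [pow_add]
    rw [ENNReal.tsum_mul_left, ENNReal.tsum_geometric]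
  rw [this]
  have hrL : r ^ L ≤ (2:ℝ≥0∞) ^ (p - (d:ℝ)) * (K : ℝ≥0∞) ^ ((d:ℝ) - p) := by
    have hK2 : (K : ℝ≥0∞) ≤ 2 * (2:ℝ≥0∞) ^ (L:ℕ) := by
      have := Nat.lt_pow_succ_log_self (by norm_num : 1 < 2) K
      have h2 : K ≤ 2 * 2 ^ L := by
        have : K < 2 ^ (L + 1) := this
        have e : 2 ^ (L + 1) = 2 * 2 ^ L := by ring
        omega
      exact_mod_cast h2
    have h1 : (K : ℝ≥0∞) ^ ((d:ℝ) - p) ≥ (2 * (2:ℝ≥0∞) ^ (L:ℕ)) ^ ((d:ℝ) - p) :=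
      rpow_anti hK2 hdp.le
    have h2 : (2 * (2:ℝ≥0∞) ^ (L:ℕ)) ^ ((d:ℝ) - p) =
        (2:ℝ≥0∞) ^ ((d:ℝ) - p) * r ^ L := by
      rw [ENNReal.mul_rpow_of_ne_top (by norm_num) (two_pow_ne_top L), two_pow_rpow]
    have h3 : (2:ℝ≥0∞) ^ (p - (d:ℝ)) * (2:ℝ≥0∞) ^ ((d:ℝ) - p) = 1 := by
      rw [← ENNReal.rpow_add _ _ (by norm_num) (by norm_num)]
      norm_num
    calc r ^ L = ((2:ℝ≥0∞) ^ (p - (d:ℝ)) * (2:ℝ≥0∞) ^ ((d:ℝ) - p)) * r ^ L := by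
          rw [h3, one_mul]
      _ = (2:ℝ≥0∞) ^ (p - (d:ℝ)) * ((2 * (2:ℝ≥0∞) ^ (L:ℕ)) ^ ((d:ℝ) - p)) := by
          rw [h2]; ring
      _ ≤ (2:ℝ≥0∞) ^ (p - (d:ℝ)) * (K : ℝ≥0∞) ^ ((d:ℝ) - p) := mul_le_mul_right h1 _
  calc (8:ℝ≥0∞)^d * (r ^ L * (1 - r)⁻¹)
      ≤ (8:ℝ≥0∞)^d * (((2:ℝ≥0∞) ^ (p - (d:ℝ)) * (K : ℝ≥0∞) ^ ((d:ℝ) - p)) * (1 - r)⁻¹) :=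
        mul_le_mul_right (mul_le_mul_left hrL _) _
    _ = (8:ℝ≥0∞)^d * ((2:ℝ≥0∞) ^ (p - (d:ℝ)) * (1 - r)⁻¹) * (K : ℝ≥0∞) ^ ((d:ℝ) - p) := by
        ring

lemma E_cast (a b : Zd d) : E a b = ((1 + Nl (a - b) : ℕ) : ℝ≥0∞) := rfl

lemma two_rpow_cancel (t : ℝ) : (2:ℝ≥0∞) ^ t * (2:ℝ≥0∞) ^ (-t) = 1 := by
  rw [← ENNReal.rpow_add _ _ (by norm_num) (by norm_num)]; norm_num

lemma region {s t : ℝ} (hs0 : 0 ≤ s) (hsd : s < d) (ht0 : 0 ≤ t) (hst : (d:ℝ) < s + t) :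
    ∃ C : ℝ≥0∞, C ≠ ⊤ ∧ ∀ u v : Zd d,
      ∑' a : Zd d, (if E a u ≤ E a v then (E a u) ^ (-s) * (E a v) ^ (-t) else 0)
        ≤ C * (E u v) ^ ((d:ℝ) - (s + t)) := by
  obtain ⟨CA, hCA, hA⟩ := lemA (d := d) hs0 hsd
  obtain ⟨CB, hCB, hB⟩ := lemB (d := d) hst
  refine ⟨(2:ℝ≥0∞) ^ t * CA + CB, ?_, ?_⟩
  · exact ENNReal.add_ne_top.2 ⟨ENNReal.mul_ne_top
      (ENNReal.rpow_ne_top_of_nonneg ht0 (by norm_num)) hCA, hCB⟩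
  intro u v
  set K := 1 + Nl (u - v) with hKdef
  have hK : 1 ≤ K := by omega
  have hKne0 : ((K:ℕ) : ℝ≥0∞) ≠ 0 := Nat.cast_ne_zero.2 (by omega)
  have hKnetop : ((K:ℕ) : ℝ≥0∞) ≠ ⊤ := natCast_ne_top _
  have hEuv : E u v = ((K:ℕ) : ℝ≥0∞) := rfl
  have claim : ∀ a : Zd d,
      (if E a u ≤ E a v then (E a u) ^ (-s) * (E a v) ^ (-t) else 0)
        ≤ (2:ℝ≥0∞) ^ t * ((K:ℕ) : ℝ≥0∞) ^ (-t) *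
            (if 1 + Nl (a - u) ≤ K then ((1 + Nl (a - u) : ℕ) : ℝ≥0∞) ^ (-s) else 0)
          + (if K < 1 + Nl (a - u) then ((1 + Nl (a - u) : ℕ) : ℝ≥0∞) ^ (-(s + t)) else 0) := by
    intro a
    by_cases hle : E a u ≤ E a v
    swap
    · rw [if_neg hle]; exact zero_le
    rw [if_pos hle]
    set nu := 1 + Nl (a - u) with hnu
    set nv := 1 + Nl (a - v) with hnv
    have hnucast : E a u = ((nu:ℕ) : ℝ≥0∞) := rfl
    have hnvcast : E a v = ((nv:ℕ) : ℝ≥0∞) := rfl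
    have hnuv : nu ≤ nv := by
      rw [hnucast, hnvcast] at hle; exact_mod_cast hle
    have hnune0 : ((nu:ℕ) : ℝ≥0∞) ≠ 0 := by
      exact_mod_cast (by omega : nu ≠ 0)
    have hnunetop : ((nu:ℕ) : ℝ≥0∞) ≠ ⊤ := natCast_ne_top _
    by_cases hcase : nu ≤ K
    · -- triangle: K ≤ nu + nv ≤ 2 nv
      have htri : K ≤ 2 * nv := by
        have h1 : Nl (u - v) ≤ Nl (u - a) + Nl (a - v) := Nl_triangle u a v
        have h2 : Nl (u - a) = Nl (a - u) := Nl_sub_symm u a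
        omega
      have hnvbound : ((nv:ℕ) : ℝ≥0∞) ^ (-t) ≤ (2:ℝ≥0∞) ^ t * ((K:ℕ) : ℝ≥0∞) ^ (-t) := by
        have hcast : ((K:ℕ) : ℝ≥0∞) ≤ 2 * ((nv:ℕ) : ℝ≥0∞) := by exact_mod_cast htri
        have h1 : (2 * ((nv:ℕ) : ℝ≥0∞)) ^ (-t) ≤ ((K:ℕ) : ℝ≥0∞) ^ (-t) :=
          rpow_anti hcast (by linarith)
        have h2 : (2 * ((nv:ℕ) : ℝ≥0∞)) ^ (-t) =
            (2:ℝ≥0∞) ^ (-t) * ((nv:ℕ) : ℝ≥0∞) ^ (-t) :=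
          ENNReal.mul_rpow_of_ne_top (by norm_num : (2:ℝ≥0∞) ≠ ⊤) (natCast_ne_top nv) (-t)
        calc ((nv:ℕ) : ℝ≥0∞) ^ (-t)
            = (2:ℝ≥0∞) ^ t * ((2:ℝ≥0∞) ^ (-t) * ((nv:ℕ) : ℝ≥0∞) ^ (-t)) := by
              rw [← mul_assoc, two_rpow_cancel, one_mul]
          _ = (2:ℝ≥0∞) ^ t * (2 * ((nv:ℕ) : ℝ≥0∞)) ^ (-t) := by rw [h2]
          _ ≤ (2:ℝ≥0∞) ^ t * ((K:ℕ) : ℝ≥0∞) ^ (-t) := mul_le_mul_right h1 _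
      calc (E a u) ^ (-s) * (E a v) ^ (-t)
          ≤ ((nu:ℕ) : ℝ≥0∞) ^ (-s) * ((2:ℝ≥0∞) ^ t * ((K:ℕ) : ℝ≥0∞) ^ (-t)) := by
            rw [hnucast, hnvcast]; exact mul_le_mul_right hnvbound _
        _ = (2:ℝ≥0∞) ^ t * ((K:ℕ) : ℝ≥0∞) ^ (-t) *
              (if nu ≤ K then ((nu:ℕ) : ℝ≥0∞) ^ (-s) else 0) := by
            rw [if_pos hcase]; ring
        _ ≤ _ := le_add_right le_rfl
    · push_neg at hcase
      calc (E a u) ^ (-s) * (E a v) ^ (-t)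
          ≤ ((nu:ℕ) : ℝ≥0∞) ^ (-s) * ((nu:ℕ) : ℝ≥0∞) ^ (-t) := by
            rw [hnucast, hnvcast]
            exact mul_le_mul_right (rpow_anti (by exact_mod_cast hnuv) (by linarith)) _
        _ = (if K < nu then ((nu:ℕ) : ℝ≥0∞) ^ (-(s + t)) else 0) := by
            rw [if_pos hcase, ← ENNReal.rpow_add _ _ hnune0 hnunetop]
            congr 1; ring
        _ ≤ _ := le_add_left le_rfl
  calc ∑' a : Zd d, (if E a u ≤ E a v then (E a u) ^ (-s) * (E a v) ^ (-t) else 0)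
      ≤ ∑' a : Zd d, ((2:ℝ≥0∞) ^ t * ((K:ℕ) : ℝ≥0∞) ^ (-t) *
            (if 1 + Nl (a - u) ≤ K then ((1 + Nl (a - u) : ℕ) : ℝ≥0∞) ^ (-s) else 0)
          + (if K < 1 + Nl (a - u) then ((1 + Nl (a - u) : ℕ) : ℝ≥0∞) ^ (-(s + t)) else 0)) :=
        ENNReal.tsum_le_tsum claim
    _ = (2:ℝ≥0∞) ^ t * ((K:ℕ) : ℝ≥0∞) ^ (-t) *
          (∑' a : Zd d, (if 1 + Nl a ≤ K then ((1 + Nl a : ℕ) : ℝ≥0∞) ^ (-s) else 0))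
        + ∑' a : Zd d, (if K < 1 + Nl a then ((1 + Nl a : ℕ) : ℝ≥0∞) ^ (-(s + t)) else 0) := by
        have he1 : (∑' a : Zd d, (if 1 + Nl (a - u) ≤ K then ((1 + Nl (a - u) : ℕ) : ℝ≥0∞) ^ (-s) else 0))
            = ∑' a : Zd d, (if 1 + Nl a ≤ K then ((1 + Nl a : ℕ) : ℝ≥0∞) ^ (-s) else 0) :=
          (Equiv.subRight u).tsum_eq
            (fun b => if 1 + Nl b ≤ K then ((1 + Nl b : ℕ) : ℝ≥0∞) ^ (-s) else 0)
        have he2 : (∑' a : Zd d, (if K < 1 + Nl (a - u) then ((1 + Nl (a - u) : ℕ) : ℝ≥0∞) ^ (-(s + t)) else 0))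
            = ∑' a : Zd d, (if K < 1 + Nl a then ((1 + Nl a : ℕ) : ℝ≥0∞) ^ (-(s + t)) else 0) :=
          (Equiv.subRight u).tsum_eq
            (fun b => if K < 1 + Nl b then ((1 + Nl b : ℕ) : ℝ≥0∞) ^ (-(s + t)) else 0)
        rw [ENNReal.tsum_add, ENNReal.tsum_mul_left, he1, he2]
    _ ≤ (2:ℝ≥0∞) ^ t * ((K:ℕ) : ℝ≥0∞) ^ (-t) * (CA * ((K:ℕ) : ℝ≥0∞) ^ ((d:ℝ) - s))
        + CB * ((K:ℕ) : ℝ≥0∞) ^ ((d:ℝ) - (s + t)) := by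
        exact add_le_add (mul_le_mul_right (hA K hK) _) (hB K hK)
    _ = ((2:ℝ≥0∞) ^ t * CA + CB) * ((K:ℕ) : ℝ≥0∞) ^ ((d:ℝ) - (s + t)) := by
        have e : ((K:ℕ):ℝ≥0∞) ^ (-t) * ((K:ℕ):ℝ≥0∞) ^ ((d:ℝ) - s)
            = ((K:ℕ):ℝ≥0∞) ^ ((d:ℝ) - (s + t)) := by
          rw [← ENNReal.rpow_add _ _ hKne0 hKnetop]
          congr 1; ring
        calc (2:ℝ≥0∞) ^ t * ((K:ℕ) : ℝ≥0∞) ^ (-t) * (CA * ((K:ℕ) : ℝ≥0∞) ^ ((d:ℝ) - s))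
              + CB * ((K:ℕ) : ℝ≥0∞) ^ ((d:ℝ) - (s + t))
            = (2:ℝ≥0∞) ^ t * CA * (((K:ℕ):ℝ≥0∞) ^ (-t) * ((K:ℕ):ℝ≥0∞) ^ ((d:ℝ) - s))
              + CB * ((K:ℕ) : ℝ≥0∞) ^ ((d:ℝ) - (s + t)) := by ring
          _ = ((2:ℝ≥0∞) ^ t * CA + CB) * ((K:ℕ) : ℝ≥0∞) ^ ((d:ℝ) - (s + t)) := by
              rw [e, add_mul]
    _ = ((2:ℝ≥0∞) ^ t * CA + CB) * (E u v) ^ ((d:ℝ) - (s + t)) := by rw [hEuv]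

lemma twopoint {s t : ℝ} (hs0 : 0 ≤ s) (hsd : s < d) (ht0 : 0 ≤ t) (htd : t < d)
    (hst : (d:ℝ) < s + t) :
    ∃ C : ℝ≥0∞, C ≠ ⊤ ∧ ∀ u v : Zd d,
      ∑' a : Zd d, (E a u) ^ (-s) * (E a v) ^ (-t) ≤ C * (E u v) ^ ((d:ℝ) - (s + t)) := by
  obtain ⟨C1, hC1, h1⟩ := region (d := d) hs0 hsd ht0 hst
  obtain ⟨C2, hC2, h2⟩ := region (d := d) ht0 htd hs0 (by linarith)
  refine ⟨C1 + C2, ENNReal.add_ne_top.2 ⟨hC1, hC2⟩, ?_⟩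
  intro u v
  have claim : ∀ a : Zd d, (E a u) ^ (-s) * (E a v) ^ (-t)
      ≤ (if E a u ≤ E a v then (E a u) ^ (-s) * (E a v) ^ (-t) else 0)
        + (if E a v ≤ E a u then (E a v) ^ (-t) * (E a u) ^ (-s) else 0) := by
    intro a
    rcases le_total (E a u) (E a v) with h | h
    · rw [if_pos h]; exact le_add_right le_rfl
    · rw [if_pos h, mul_comm]; exact le_add_left le_rfl
  calc ∑' a : Zd d, (E a u) ^ (-s) * (E a v) ^ (-t)
      ≤ ∑' a : Zd d, ((if E a u ≤ E a v then (E a u) ^ (-s) * (E a v) ^ (-t) else 0)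
          + (if E a v ≤ E a u then (E a v) ^ (-t) * (E a u) ^ (-s) else 0)) :=
        ENNReal.tsum_le_tsum claim
    _ = (∑' a : Zd d, (if E a u ≤ E a v then (E a u) ^ (-s) * (E a v) ^ (-t) else 0))
        + ∑' a : Zd d, (if E a v ≤ E a u then (E a v) ^ (-t) * (E a u) ^ (-s) else 0) :=
        ENNReal.tsum_add
    _ ≤ C1 * (E u v) ^ ((d:ℝ) - (s + t)) + C2 * (E v u) ^ ((d:ℝ) - (t + s)) := by
        gcongr
        · exact h1 u v
        · exact h2 v u
    _ = (C1 + C2) * (E u v) ^ ((d:ℝ) - (s + t)) := by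
        rw [E_symm v u, show (d:ℝ) - (t + s) = (d:ℝ) - (s + t) by ring, add_mul]

lemma E_half {a u y : Zd d} (h : E a u ≤ E a y) : E u y ≤ 2 * E a y := by
  have hn : (1 + Nl (a - u) : ℕ) ≤ (1 + Nl (a - y) : ℕ) := by
    have := h; rw [E_cast, E_cast] at this; exact_mod_cast this
  have htri : Nl (u - y) ≤ Nl (u - a) + Nl (a - y) := Nl_triangle u a y
  have hsymm : Nl (u - a) = Nl (a - u) := Nl_sub_symm u a
  have : (1 + Nl (u - y) : ℕ) ≤ 2 * (1 + Nl (a - y)) := by omega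
  rw [E_cast, E_cast]
  exact_mod_cast this

lemma rpow_neg_of_le_double {m w : ℝ≥0∞} (hw : w ≠ ⊤) (h : m ≤ 2 * w) {r : ℝ} (hr : 0 ≤ r) :
    w ^ (-r) ≤ (2:ℝ≥0∞) ^ r * m ^ (-r) := by
  have h1 : (2 * w) ^ (-r) ≤ m ^ (-r) := rpow_anti h (by linarith)
  have h2 : (2 * w) ^ (-r) = (2:ℝ≥0∞) ^ (-r) * w ^ (-r) :=
    ENNReal.mul_rpow_of_ne_top (by norm_num : (2:ℝ≥0∞) ≠ ⊤) hw (-r)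
  calc w ^ (-r) = (2:ℝ≥0∞) ^ r * ((2:ℝ≥0∞) ^ (-r) * w ^ (-r)) := by
        rw [← mul_assoc, two_rpow_cancel, one_mul]
    _ = (2:ℝ≥0∞) ^ r * (2 * w) ^ (-r) := by rw [h2]
    _ ≤ (2:ℝ≥0∞) ^ r * m ^ (-r) := mul_le_mul_right h1 _

lemma case_pt {γ su sv : ℝ} (hγ : 0 ≤ γ) (hγsu : γ ≤ su) (a u v z : Zd d)
    (h1 : E a v ≤ E a u) (h2 : E a z ≤ E a u) :
    (E a u) ^ (-su) * (E a v) ^ (-sv) * (E a z) ^ (-γ)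
      ≤ (2:ℝ≥0∞) ^ γ * (max (E u v) (E u z)) ^ (-γ) * ((E a v) ^ (-sv) * (E a z) ^ (-su)) := by
  have hEuv : E u v ≤ 2 * E a u := by rw [E_symm u v]; exact E_half h1
  have hEuz : E u z ≤ 2 * E a u := by rw [E_symm u z]; exact E_half h2
  have hmax : max (E u v) (E u z) ≤ 2 * E a u := max_le hEuv hEuz
  have hmain : (E a u) ^ (-γ) ≤ (2:ℝ≥0∞) ^ γ * (max (E u v) (E u z)) ^ (-γ) :=
    rpow_neg_of_le_double (E_ne_top a u) hmax hγ
  have hsplit : (E a u) ^ (-su) = (E a u) ^ (-γ) * (E a u) ^ (-(su - γ)) := by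
    rw [← ENNReal.rpow_add _ _ (E_ne_zero a u) (E_ne_top a u)]
    congr 1; ring
  have hmono : (E a u) ^ (-(su - γ)) ≤ (E a z) ^ (-(su - γ)) :=
    rpow_anti h2 (by linarith)
  have hzcomb : (E a z) ^ (-(su - γ)) * (E a z) ^ (-γ) = (E a z) ^ (-su) := by
    rw [← ENNReal.rpow_add _ _ (E_ne_zero a z) (E_ne_top a z)]
    congr 1; ring
  calc (E a u) ^ (-su) * (E a v) ^ (-sv) * (E a z) ^ (-γ)
      = ((E a u) ^ (-γ) * (E a u) ^ (-(su - γ))) * (E a v) ^ (-sv) * (E a z) ^ (-γ) := by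
        rw [← hsplit]
    _ ≤ ((2:ℝ≥0∞) ^ γ * (max (E u v) (E u z)) ^ (-γ) * (E a z) ^ (-(su - γ)))
          * (E a v) ^ (-sv) * (E a z) ^ (-γ) := by
        gcongr
    _ = (2:ℝ≥0∞) ^ γ * (max (E u v) (E u z)) ^ (-γ)
          * ((E a v) ^ (-sv) * ((E a z) ^ (-(su - γ)) * (E a z) ^ (-γ))) := by ring
    _ = (2:ℝ≥0∞) ^ γ * (max (E u v) (E u z)) ^ (-γ) * ((E a v) ^ (-sv) * (E a z) ^ (-su)) := by
        rw [hzcomb]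

lemma case_z {γ sx sy : ℝ} (hγ : 0 ≤ γ) (a x y z : Zd d)
    (h1 : E a x ≤ E a z) (h2 : E a y ≤ E a z) :
    (E a x) ^ (-sx) * (E a y) ^ (-sy) * (E a z) ^ (-γ)
      ≤ (2:ℝ≥0∞) ^ γ * ((E x z) ^ (-(γ/2)) * (E y z) ^ (-(γ/2)))
        * ((E a x) ^ (-sx) * (E a y) ^ (-sy)) := by
  have hExz : E x z ≤ 2 * E a z := E_half h1
  have hEyz : E y z ≤ 2 * E a z := E_half h2
  have hx : (E a z) ^ (-(γ/2)) ≤ (2:ℝ≥0∞) ^ (γ/2) * (E x z) ^ (-(γ/2)) :=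
    rpow_neg_of_le_double (E_ne_top a z) hExz (by linarith)
  have hy : (E a z) ^ (-(γ/2)) ≤ (2:ℝ≥0∞) ^ (γ/2) * (E y z) ^ (-(γ/2)) :=
    rpow_neg_of_le_double (E_ne_top a z) hEyz (by linarith)
  have hsplit : (E a z) ^ (-γ) = (E a z) ^ (-(γ/2)) * (E a z) ^ (-(γ/2)) := by
    rw [← ENNReal.rpow_add _ _ (E_ne_zero a z) (E_ne_top a z)]
    congr 1; ring
  have h2split : (2:ℝ≥0∞) ^ (γ/2) * (2:ℝ≥0∞) ^ (γ/2) = (2:ℝ≥0∞) ^ γ := by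
    rw [← ENNReal.rpow_add _ _ (by norm_num) (by norm_num)]
    congr 1; ring
  calc (E a x) ^ (-sx) * (E a y) ^ (-sy) * (E a z) ^ (-γ)
      = ((E a z) ^ (-(γ/2)) * (E a z) ^ (-(γ/2))) * ((E a x) ^ (-sx) * (E a y) ^ (-sy)) := by
        rw [← hsplit]; ring
    _ ≤ (((2:ℝ≥0∞) ^ (γ/2) * (E x z) ^ (-(γ/2))) * ((2:ℝ≥0∞) ^ (γ/2) * (E y z) ^ (-(γ/2))))
          * ((E a x) ^ (-sx) * (E a y) ^ (-sy)) := by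
        gcongr
    _ = (2:ℝ≥0∞) ^ γ * ((E x z) ^ (-(γ/2)) * (E y z) ^ (-(γ/2)))
          * ((E a x) ^ (-sx) * (E a y) ^ (-sy)) := by
        rw [← h2split]; ring

lemma max_E_ne_top (u v w t : Zd d) : max (E u v) (E w t) ≠ ⊤ := by
  rw [ne_eq, max_eq_top]
  push_neg
  exact ⟨E_ne_top _ _, E_ne_top _ _⟩

lemma prod_rpow_le {A B M : ℝ≥0∞} (hA : A ≠ ⊤) (hB : B ≠ ⊤) (hle : M ≤ A * B) {r : ℝ}
    (hr : 0 ≤ r) : A ^ (-r) * B ^ (-r) ≤ M ^ (-r) := by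
  rw [← ENNReal.mul_rpow_of_ne_top hA hB]
  exact rpow_anti hle (by linarith)

lemma threepoint {α β : ℝ} (hα0 : 0 ≤ α) (hαd : α < d) (hβ0 : 0 ≤ β) (hβd : β < d)
    (hγ : 0 < α + β - (d:ℝ)) :
    ∃ CE : ℝ≥0∞, CE ≠ ⊤ ∧ ∀ x y z : Zd d,
      ∑' a : Zd d, (E a x) ^ (-α) * (E a y) ^ (-β) * (E a z) ^ (-(α + β - (d:ℝ)))
        ≤ CE * (min (E x y * E y z) (min (E y z * E z x) (E z x * E x y)))
            ^ (-(α + β - (d:ℝ))) := by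
  set γ := α + β - (d:ℝ) with hγdef
  have hγ0 : 0 ≤ γ := hγ.le
  have hγα : γ ≤ α := by rw [hγdef]; linarith
  have hγβ : γ ≤ β := by rw [hγdef]; linarith
  obtain ⟨C1, hC1, h1⟩ := twopoint (d := d) hα0 hαd hβ0 hβd (by linarith)
  obtain ⟨C2, hC2, h2⟩ := twopoint (d := d) hβ0 hβd hα0 hαd (by linarith)
  have hexp1 : (d:ℝ) - (α + β) = -γ := by rw [hγdef]; ring
  have hexp2 : (d:ℝ) - (β + α) = -γ := by rw [hγdef]; ring
  refine ⟨(2:ℝ≥0∞) ^ γ * (C1 + C2 + C1), ?_, ?_⟩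
  · exact ENNReal.mul_ne_top (ENNReal.rpow_ne_top_of_nonneg hγ0 (by norm_num))
      (by simp [ENNReal.add_ne_top, hC1, hC2])
  intro x y z
  set M := min (E x y * E y z) (min (E y z * E z x) (E z x * E x y)) with hM
  have hM1 : 1 ≤ M := by
    rw [hM]
    refine le_min (one_le_mul (one_le_E _ _) (one_le_E _ _))
      (le_min (one_le_mul (one_le_E _ _) (one_le_E _ _))
        (one_le_mul (one_le_E _ _) (one_le_E _ _)))
  have hMne0 : M ≠ 0 := (lt_of_lt_of_le zero_lt_one hM1).ne'
  have hMnetop : M ≠ ⊤ := by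
    rw [hM]
    exact ne_top_of_le_ne_top (ENNReal.mul_ne_top (E_ne_top x y) (E_ne_top y z)) (min_le_left _ _)
  -- three products ≥ M
  have hMle1 : M ≤ E x y * E y z := min_le_left _ _
  have hMle2 : M ≤ E y z * E z x := le_trans (min_le_right _ _) (min_le_left _ _)
  have hMle3 : M ≤ E z x * E x y := le_trans (min_le_right _ _) (min_le_right _ _)
  -- pointwise split
  have split : ∀ a : Zd d,
      (E a x) ^ (-α) * (E a y) ^ (-β) * (E a z) ^ (-γ)
        ≤ ((2:ℝ≥0∞) ^ γ * (max (E x y) (E x z)) ^ (-γ) * ((E a y) ^ (-β) * (E a z) ^ (-α)))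
          + ((2:ℝ≥0∞) ^ γ * (max (E y x) (E y z)) ^ (-γ) * ((E a x) ^ (-α) * (E a z) ^ (-β)))
          + ((2:ℝ≥0∞) ^ γ * ((E x z) ^ (-(γ/2)) * (E y z) ^ (-(γ/2)))
              * ((E a x) ^ (-α) * (E a y) ^ (-β))) := by
    intro a
    rcases le_total (E a x) (E a y) with hxy | hxy
    · rcases le_total (E a y) (E a z) with hyz | hyz
      · -- z max
        have hb := case_z (sx := α) (sy := β) hγ0 a x y z (le_trans hxy hyz) hyz
        exact le_add_left hb
      · -- y max
        have hb := case_pt (su := β) (sv := α) hγ0 hγβ a y x z hxy hyz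
        have : (E a x) ^ (-α) * (E a y) ^ (-β) * (E a z) ^ (-γ)
            ≤ (2:ℝ≥0∞) ^ γ * (max (E y x) (E y z)) ^ (-γ)
              * ((E a x) ^ (-α) * (E a z) ^ (-β)) := by
          calc (E a x) ^ (-α) * (E a y) ^ (-β) * (E a z) ^ (-γ)
              = (E a y) ^ (-β) * (E a x) ^ (-α) * (E a z) ^ (-γ) := by ring
            _ ≤ _ := hb
        exact le_add_right (le_add_left this)
    · rcases le_total (E a x) (E a z) with hxz | hxz
      · -- z max
        have hb := case_z (sx := α) (sy := β) hγ0 a x y z hxz (le_trans hxy hxz)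
        exact le_add_left hb
      · -- x max
        have hb := case_pt (su := α) (sv := β) hγ0 hγα a x y z hxy hxz
        exact le_add_right (le_add_right hb)
  have tsum_split := ENNReal.tsum_le_tsum split
  rw [ENNReal.tsum_add, ENNReal.tsum_add, ENNReal.tsum_mul_left, ENNReal.tsum_mul_left,
    ENNReal.tsum_mul_left] at tsum_split
  -- bound each of the three sums
  have hb1 : (2:ℝ≥0∞) ^ γ * (max (E x y) (E x z)) ^ (-γ)
        * (∑' a : Zd d, (E a y) ^ (-β) * (E a z) ^ (-α))
      ≤ (2:ℝ≥0∞) ^ γ * C2 * M ^ (-γ) := by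
    have hs := h2 y z
    rw [hexp2] at hs
    have hle : M ≤ max (E x y) (E x z) * E y z := by
      rcases max_choice (E x y) (E x z) with hc | hc <;> rw [hc]
      · exact hMle1
      · calc M ≤ E y z * E z x := hMle2
          _ = E x z * E y z := by rw [E_symm z x]; ring
    have hprod : (max (E x y) (E x z)) ^ (-γ) * (E y z) ^ (-γ) ≤ M ^ (-γ) :=
      prod_rpow_le (max_E_ne_top x y x z) (E_ne_top y z) hle hγ0
    calc (2:ℝ≥0∞) ^ γ * (max (E x y) (E x z)) ^ (-γ)
          * (∑' a : Zd d, (E a y) ^ (-β) * (E a z) ^ (-α))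
        ≤ (2:ℝ≥0∞) ^ γ * (max (E x y) (E x z)) ^ (-γ) * (C2 * (E y z) ^ (-γ)) := by
          exact mul_le_mul_right hs _
      _ = (2:ℝ≥0∞) ^ γ * C2 * ((max (E x y) (E x z)) ^ (-γ) * (E y z) ^ (-γ)) := by ring
      _ ≤ (2:ℝ≥0∞) ^ γ * C2 * M ^ (-γ) := mul_le_mul_right hprod _
  have hb2 : (2:ℝ≥0∞) ^ γ * (max (E y x) (E y z)) ^ (-γ)
        * (∑' a : Zd d, (E a x) ^ (-α) * (E a z) ^ (-β))
      ≤ (2:ℝ≥0∞) ^ γ * C1 * M ^ (-γ) := by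
    have hs := h1 x z
    rw [hexp1] at hs
    have hle : M ≤ max (E y x) (E y z) * E x z := by
      rcases max_choice (E y x) (E y z) with hc | hc <;> rw [hc]
      · calc M ≤ E z x * E x y := hMle3
          _ = E y x * E x z := by rw [E_symm z x, E_symm x y]; ring
      · calc M ≤ E y z * E z x := hMle2
          _ = E y z * E x z := by rw [E_symm z x]
    have hprod : (max (E y x) (E y z)) ^ (-γ) * (E x z) ^ (-γ) ≤ M ^ (-γ) :=
      prod_rpow_le (max_E_ne_top y x y z) (E_ne_top x z) hle hγ0
    calc (2:ℝ≥0∞) ^ γ * (max (E y x) (E y z)) ^ (-γ)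
          * (∑' a : Zd d, (E a x) ^ (-α) * (E a z) ^ (-β))
        ≤ (2:ℝ≥0∞) ^ γ * (max (E y x) (E y z)) ^ (-γ) * (C1 * (E x z) ^ (-γ)) := by
          exact mul_le_mul_right hs _
      _ = (2:ℝ≥0∞) ^ γ * C1 * ((max (E y x) (E y z)) ^ (-γ) * (E x z) ^ (-γ)) := by ring
      _ ≤ (2:ℝ≥0∞) ^ γ * C1 * M ^ (-γ) := mul_le_mul_right hprod _
  have hb3 : (2:ℝ≥0∞) ^ γ * ((E x z) ^ (-(γ/2)) * (E y z) ^ (-(γ/2)))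
        * (∑' a : Zd d, (E a x) ^ (-α) * (E a y) ^ (-β))
      ≤ (2:ℝ≥0∞) ^ γ * C1 * M ^ (-γ) := by
    have hs := h1 x y
    rw [hexp1] at hs
    have hMsplit : M ^ (-γ) = M ^ (-(γ/2)) * M ^ (-(γ/2)) := by
      rw [← ENNReal.rpow_add _ _ hMne0 hMnetop]
      congr 1; ring
    have hxysplit : (E x y) ^ (-γ) = (E x y) ^ (-(γ/2)) * (E x y) ^ (-(γ/2)) := by
      rw [← ENNReal.rpow_add _ _ (E_ne_zero x y) (E_ne_top x y)]
      congr 1; ring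
    have hp1 : (E x y) ^ (-(γ/2)) * (E x z) ^ (-(γ/2)) ≤ M ^ (-(γ/2)) := by
      have hle : M ≤ E x y * E x z := by
        calc M ≤ E z x * E x y := hMle3
          _ = E x y * E x z := by rw [E_symm z x]; ring
      exact prod_rpow_le (E_ne_top x y) (E_ne_top x z) hle (by linarith)
    have hp2 : (E x y) ^ (-(γ/2)) * (E y z) ^ (-(γ/2)) ≤ M ^ (-(γ/2)) :=
      prod_rpow_le (E_ne_top x y) (E_ne_top y z) hMle1 (by linarith)
    calc (2:ℝ≥0∞) ^ γ * ((E x z) ^ (-(γ/2)) * (E y z) ^ (-(γ/2)))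
          * (∑' a : Zd d, (E a x) ^ (-α) * (E a y) ^ (-β))
        ≤ (2:ℝ≥0∞) ^ γ * ((E x z) ^ (-(γ/2)) * (E y z) ^ (-(γ/2)))
            * (C1 * (E x y) ^ (-γ)) := mul_le_mul_right hs _
      _ = (2:ℝ≥0∞) ^ γ * C1 * (((E x y) ^ (-(γ/2)) * (E x z) ^ (-(γ/2)))
            * ((E x y) ^ (-(γ/2)) * (E y z) ^ (-(γ/2)))) := by
          rw [hxysplit]; ring
      _ ≤ (2:ℝ≥0∞) ^ γ * C1 * (M ^ (-(γ/2)) * M ^ (-(γ/2))) := by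
          exact mul_le_mul_right (mul_le_mul' hp1 hp2) _
      _ = (2:ℝ≥0∞) ^ γ * C1 * M ^ (-γ) := by rw [← hMsplit]
  calc ∑' a : Zd d, (E a x) ^ (-α) * (E a y) ^ (-β) * (E a z) ^ (-γ)
      ≤ (2:ℝ≥0∞) ^ γ * (max (E x y) (E x z)) ^ (-γ)
          * (∑' a : Zd d, (E a y) ^ (-β) * (E a z) ^ (-α))
        + (2:ℝ≥0∞) ^ γ * (max (E y x) (E y z)) ^ (-γ)
          * (∑' a : Zd d, (E a x) ^ (-α) * (E a z) ^ (-β))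
        + (2:ℝ≥0∞) ^ γ * ((E x z) ^ (-(γ/2)) * (E y z) ^ (-(γ/2)))
          * (∑' a : Zd d, (E a x) ^ (-α) * (E a y) ^ (-β)) := tsum_split
    _ ≤ (2:ℝ≥0∞) ^ γ * C2 * M ^ (-γ) + (2:ℝ≥0∞) ^ γ * C1 * M ^ (-γ)
        + (2:ℝ≥0∞) ^ γ * C1 * M ^ (-γ) := add_le_add (add_le_add hb1 hb2) hb3
    _ = (2:ℝ≥0∞) ^ γ * (C1 + C2 + C1) * M ^ (-γ) := by ring

lemma br_eq (x y : Zd d) : br x y = ((1 + Nl (x - y) : ℕ) : ℝ) := by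
  unfold br Nl
  push_cast
  congr 1
  apply Finset.sum_congr rfl
  intro i _
  have : (x i : ℝ) - y i = (((x - y) i : ℤ) : ℝ) := by push_cast; simp
  rw [this, Nat.cast_natAbs, Int.cast_abs]

lemma br_pos (x y : Zd d) : 0 < br x y := by
  rw [br_eq]; positivity

lemma ofReal_br (x y : Zd d) : ENNReal.ofReal (br x y) = E x y := by
  rw [br_eq, E_cast, ENNReal.ofReal_natCast]

lemma ofReal_br_rpow (x y : Zd d) (r : ℝ) :
    ENNReal.ofReal (br x y ^ r) = (E x y) ^ r := by
  rw [← ENNReal.ofReal_rpow_of_pos (br_pos x y), ofReal_br]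

lemma ofReal_min (a b : ℝ) : ENNReal.ofReal (min a b) = min (ENNReal.ofReal a) (ENNReal.ofReal b) := by
  rcases le_total a b with h | h
  · rw [min_eq_left h, min_eq_left (ENNReal.ofReal_le_ofReal h)]
  · rw [min_eq_right h, min_eq_right (ENNReal.ofReal_le_ofReal h)]

lemma conv {ι : Type*} (f : ι → ℝ) (hf : ∀ a, 0 ≤ f a) (M : ℝ) (hM : 0 ≤ M)
    (h : ∑' a, ENNReal.ofReal (f a) ≤ ENNReal.ofReal M) : ∑' a, f a ≤ M := by
  have hne : ∑' a, ENNReal.ofReal (f a) ≠ ⊤ := (h.trans_lt ofReal_lt_top).ne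
  have heq : ∀ a, ENNReal.ofReal (f a) = ((f a).toNNReal : ℝ≥0∞) := fun a => rfl
  simp_rw [heq] at h hne
  have hsum : Summable fun a => (f a).toNNReal := tsum_coe_ne_top_iff_summable.1 hne
  have hsumf : Summable f := by
    have h2 := NNReal.summable_coe.2 hsum
    have : (fun a => ((f a).toNNReal : ℝ)) = f := by
      funext a; exact Real.coe_toNNReal _ (hf a)
    rwa [this] at h2
  have : ENNReal.ofReal (∑' a, f a) ≤ ENNReal.ofReal M := by
    rw [ENNReal.ofReal_tsum_of_nonneg hf hsumf]; exact h
  exact (ENNReal.ofReal_le_ofReal_iff hM).1 this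

theorem statement5' (α β : ℝ) (hα : α ∈ Set.Ico (0 : ℝ) d) (hβ : β ∈ Set.Ico (0 : ℝ) d)
    (hγ : 0 < α + β - d) :
    ∃ C : ℝ, 0 < C ∧ ∀ x y z : Zd d,
      (∑' a : Zd d, br a x ^ (-α) * br a y ^ (-β) * br a z ^ (-(α + β - d)))
        ≤ C * (min (br x y * br y z) (min (br y z * br z x) (br z x * br x y)))
              ^ (-(α + β - d)) := by
  obtain ⟨CE, hCE, hE⟩ := threepoint (d := d) hα.1 hα.2 hβ.1 hβ.2 hγ
  set γ := α + β - (d:ℝ) with hγdef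
  refine ⟨CE.toReal + 1, by positivity, ?_⟩
  intro x y z
  set Mreal := min (br x y * br y z) (min (br y z * br z x) (br z x * br x y)) with hMreal
  have hMpos : 0 < Mreal := by
    rw [hMreal]
    exact lt_min (mul_pos (br_pos _ _) (br_pos _ _))
      (lt_min (mul_pos (br_pos _ _) (br_pos _ _)) (mul_pos (br_pos _ _) (br_pos _ _)))
  have hfnonneg : ∀ a : Zd d, 0 ≤ br a x ^ (-α) * br a y ^ (-β) * br a z ^ (-γ) := by
    intro a
    have h1 := br_pos a x
    have h2 := br_pos a y
    have h3 := br_pos a z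
    positivity
  apply conv _ hfnonneg
  · exact mul_nonneg (by positivity) (Real.rpow_nonneg hMpos.le _)
  have hof : ∀ a : Zd d,
      ENNReal.ofReal (br a x ^ (-α) * br a y ^ (-β) * br a z ^ (-γ))
        = (E a x) ^ (-α) * (E a y) ^ (-β) * (E a z) ^ (-γ) := by
    intro a
    have n1 : 0 ≤ br a x ^ (-α) := Real.rpow_nonneg (br_pos a x).le _
    have n2 : 0 ≤ br a y ^ (-β) := Real.rpow_nonneg (br_pos a y).le _
    rw [ENNReal.ofReal_mul (mul_nonneg n1 n2), ENNReal.ofReal_mul n1,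
      ofReal_br_rpow, ofReal_br_rpow, ofReal_br_rpow]
  have hMof : ENNReal.ofReal Mreal
      = min (E x y * E y z) (min (E y z * E z x) (E z x * E x y)) := by
    rw [hMreal, ofReal_min, ofReal_min,
      ENNReal.ofReal_mul (br_pos x y).le, ENNReal.ofReal_mul (br_pos y z).le,
      ENNReal.ofReal_mul (br_pos z x).le,
      ofReal_br, ofReal_br, ofReal_br]
  calc ∑' a : Zd d, ENNReal.ofReal (br a x ^ (-α) * br a y ^ (-β) * br a z ^ (-γ))
      = ∑' a : Zd d, (E a x) ^ (-α) * (E a y) ^ (-β) * (E a z) ^ (-γ) := by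
        exact tsum_congr hof
    _ ≤ CE * (min (E x y * E y z) (min (E y z * E z x) (E z x * E x y))) ^ (-γ) := hE x y z
    _ = CE * ENNReal.ofReal (Mreal ^ (-γ)) := by
        rw [← ENNReal.ofReal_rpow_of_pos hMpos, hMof]
    _ ≤ ENNReal.ofReal (CE.toReal + 1) * ENNReal.ofReal (Mreal ^ (-γ)) := by
        apply mul_le_mul_left
        calc CE = ENNReal.ofReal CE.toReal := (ENNReal.ofReal_toReal hCE).symm
          _ ≤ ENNReal.ofReal (CE.toReal + 1) := ENNReal.ofReal_le_ofReal (by linarith)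
    _ = ENNReal.ofReal ((CE.toReal + 1) * Mreal ^ (-γ)) := by
        rw [ENNReal.ofReal_mul (by positivity)]

end S5


theorem statement5 {d : ℕ} (α β : ℝ) (hα : α ∈ Set.Ico (0 : ℝ) d) (hβ : β ∈ Set.Ico (0 : ℝ) d)
    (hγ : 0 < α + β - d) :
    ∃ C : ℝ, 0 < C ∧ ∀ x y z : Zd d,
      (∑' a : Zd d, br a x ^ (-α) * br a y ^ (-β) * br a z ^ (-(α + β - d)))
        ≤ C * (min (br x y * br y z) (min (br y z * br z x) (br z x * br x y)))
              ^ (-(α + β - d)) :=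
  S5.statement5' α β hα hβ hγ
end

section
/- Let (X,F,μ) be a probability space, and let {F_n} and {G_n} be two decreasing sequences of complete sub-σ-fields with G_1 independent of F_1. If both ∩_{n≥1} F_n and ∩_{n≥1} G_n are trivial (consist only of events of probability 0 or 1), then ∩_{n≥1} (F_n ∨ G_n) is trivial, where F_n ∨ G_n is the σ-field generated by F_n ∪ G_n. -/
open MeasureTheory ProbabilityTheory Finset

set_option maxHeartbeats 1000000

section helpers
open Set
variable {X : Type*}

lemma sup_eq_generateFrom_inter (m₁ m₂ : MeasurableSpace X) :
    m₁ ⊔ m₂ = MeasurableSpace.generateFrom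
      {t | ∃ C, MeasurableSet[m₁] C ∧ ∃ D, MeasurableSet[m₂] D ∧ t = C ∩ D} := by
  apply le_antisymm
  · refine sup_le ?_ ?_
    · intro t ht
      exact MeasurableSpace.measurableSet_generateFrom
        ⟨t, ht, Set.univ, MeasurableSet.univ, (Set.inter_univ t).symm⟩
    · intro t ht
      exact MeasurableSpace.measurableSet_generateFrom
        ⟨Set.univ, MeasurableSet.univ, t, ht, (Set.univ_inter t).symm⟩
  · refine MeasurableSpace.generateFrom_le ?_
    rintro t ⟨C, hC, D, hD, rfl⟩
    exact ((le_sup_left : m₁ ≤ m₁ ⊔ m₂) C hC).inter ((le_sup_right : m₂ ≤ m₁ ⊔ m₂) D hD)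

lemma isPiSystem_inter_sets (m₁ m₂ : MeasurableSpace X) :
    IsPiSystem {t : Set X | ∃ C, MeasurableSet[m₁] C ∧ ∃ D, MeasurableSet[m₂] D ∧ t = C ∩ D} := by
  rintro t ⟨C, hC, D, hD, rfl⟩ t' ⟨C', hC', D', hD', rfl⟩ -
  exact ⟨C ∩ C', hC.inter hC', D ∩ D', hD.inter hD', Set.inter_inter_inter_comm C D C' D'⟩

lemma mul_indicator_one (g : X → ℝ) (C : Set X) :
    (fun x => g x * C.indicator (fun _ => (1:ℝ)) x) = C.indicator g := by
  ext x; by_cases hx : x ∈ C <;> simp [hx]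

lemma indicator_one_mul (g : X → ℝ) (C : Set X) :
    (fun x => C.indicator (fun _ => (1:ℝ)) x * g x) = C.indicator g := by
  ext x; by_cases hx : x ∈ C <;> simp [hx]

lemma indicator_inter_mul (g : X → ℝ) (C D : Set X) :
    (C ∩ D).indicator g = fun x => D.indicator g x * C.indicator (fun _ => (1:ℝ)) x := by
  ext x
  by_cases hC : x ∈ C <;> by_cases hD : x ∈ D <;> simp [hC, hD, Set.indicator_of_mem,
    Set.indicator_of_notMem, Set.mem_inter_iff]

lemma setIntegral_indicator_one {m : MeasurableSpace X} (μ : Measure X) {S : Set X} (t : Set X)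
    (hS : MeasurableSet S) :
    ∫ x in t, S.indicator (fun _ => (1:ℝ)) x ∂μ = (μ (S ∩ t)).toReal := by
  rw [setIntegral_indicator hS, setIntegral_const, smul_eq_mul, mul_one, Set.inter_comm, measureReal_def]

/-- extend equality of set integrals from a π-system to the generated σ-algebra -/
lemma setIntegral_eq_on_generateFrom {m' : MeasurableSpace X} {m : MeasurableSpace X}
    {μ : Measure X} [IsFiniteMeasure μ] (hm' : m' ≤ m) {s : Set (Set X)}
    (h_eq : m' = MeasurableSpace.generateFrom s) (hpi : IsPiSystem s)
    {b h : X → ℝ} (hb : Integrable b μ) (hh : Integrable h μ)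
    (huniv : ∫ x, b x ∂μ = ∫ x, h x ∂μ)
    (hbasic : ∀ t ∈ s, ∫ x in t, b x ∂μ = ∫ x in t, h x ∂μ) :
    ∀ S : Set X, MeasurableSet[m'] S → ∫ x in S, b x ∂μ = ∫ x in S, h x ∂μ := by
  intro S hS
  refine MeasurableSpace.induction_on_inter (C := fun t _ => ∫ x in t, b x ∂μ = ∫ x in t, h x ∂μ) (m := m') h_eq hpi ?_ hbasic ?_ ?_ S hS
  · simp
  · intro t ht hC
    have htm : MeasurableSet[m] t := hm' t ht
    have h1 := integral_add_compl htm hb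
    have h2 := integral_add_compl htm hh
    rw [huniv] at h1
    rw [hC] at h1
    linarith [h1, h2]
  · intro f hdisj hfm hC
    have hfm' : ∀ i, MeasurableSet[m] (f i) := fun i => hm' _ (hfm i)
    rw [integral_iUnion hfm' hdisj hb.integrableOn,
      integral_iUnion hfm' hdisj hh.integrableOn]
    exact tsum_congr hC

end helpers

lemma condexp_swap {X : Type*} {F Gb Gs : MeasurableSpace X} {m : MeasurableSpace X}
    {μ : Measure X} [IsProbabilityMeasure μ]
    (hF : F ≤ m) (hGb : Gb ≤ m) (hGs : Gs ≤ Gb)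
    (hindep : ProbabilityTheory.Indep F Gb μ) {S : Set X} (hS : MeasurableSet[F ⊔ Gs] S) :
    μ[S.indicator (fun _ => (1:ℝ)) | Gb] =ᵐ[μ] μ[S.indicator (fun _ => (1:ℝ)) | Gs] := by
  have hGsm : Gs ≤ m := hGs.trans hGb
  have hsup : F ⊔ Gs ≤ m := sup_le hF hGsm
  have hSm : MeasurableSet S := hsup S hS
  set f := S.indicator (fun _ => (1:ℝ)) with hf_def
  have hf : Integrable f μ := (integrable_const (1:ℝ)).indicator hSm
  have hind := (ProbabilityTheory.Indep_iff F Gb μ).1 hindep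
  -- pull-out helper
  have pull : ∀ g u : X → ℝ, StronglyMeasurable[Gs] g → Integrable u μ →
      Integrable (fun x => g x * u x) μ →
      ∫ x, g x * u x ∂μ = ∫ x, g x * (μ[u | Gs]) x ∂μ := by
    intro g u hgsm hu hgu
    have h1 : μ[g * u | Gs] =ᵐ[μ] g * μ[u|Gs] :=
      condExp_mul_of_stronglyMeasurable_left hgsm hgu hu
    calc ∫ x, g x * u x ∂μ = ∫ x, (g * u) x ∂μ := rfl
      _ = ∫ x, (μ[g * u | Gs]) x ∂μ := (integral_condExp hGsm).symm
      _ = ∫ x, (g * μ[u|Gs]) x ∂μ := integral_congr_ae h1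
      _ = ∫ x, g x * (μ[u | Gs]) x ∂μ := rfl
  -- product with independent indicator
  have key : ∀ C : Set X, MeasurableSet[F] C → ∀ g : X → ℝ, Integrable g μ →
      StronglyMeasurable[Gb] g →
      ∫ x, g x * C.indicator (fun _ => (1:ℝ)) x ∂μ = (μ C).toReal * ∫ x, g x ∂μ := by
    intro C hC g hg hgsm
    have hCm : MeasurableSet C := hF C hC
    have hint : Integrable (fun x => g x * C.indicator (fun _ => (1:ℝ)) x) μ := by
      rw [mul_indicator_one]; exact hg.indicator hCm
    have hce : μ[g * C.indicator (fun _ => (1:ℝ)) | Gb]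
        =ᵐ[μ] g * μ[C.indicator (fun _ => (1:ℝ)) | Gb] :=
      condExp_mul_of_stronglyMeasurable_left hgsm hint ((integrable_const 1).indicator hCm)
    have hconst : μ[C.indicator (fun _ => (1:ℝ)) | Gb] =ᵐ[μ] fun _ => (μ C).toReal := by
      refine (condExp_indep_eq hF hGb (stronglyMeasurable_const.indicator hC) hindep).trans ?_
      have hin : ∫ x, C.indicator (fun _ => (1:ℝ)) x ∂μ = (μ C).toReal := by
        rw [integral_indicator hCm]; simp [measureReal_def]
      rw [hin]
    calc ∫ x, g x * C.indicator (fun _ => (1:ℝ)) x ∂μ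
        = ∫ x, (g * C.indicator (fun _ => (1:ℝ))) x ∂μ := rfl
      _ = ∫ x, (μ[g * C.indicator (fun _ => (1:ℝ)) | Gb]) x ∂μ := (integral_condExp hGb).symm
      _ = ∫ x, (g * μ[C.indicator (fun _ => (1:ℝ)) | Gb]) x ∂μ := integral_congr_ae hce
      _ = ∫ x, g x * (μ C).toReal ∂μ := integral_congr_ae (by
          filter_upwards [hconst] with x hx
          simp only [Pi.mul_apply, hx])
      _ = (μ C).toReal * ∫ x, g x ∂μ := by rw [integral_mul_const]; ring
  refine (ae_eq_condExp_of_forall_setIntegral_eq hGb hf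
    (fun t _ _ => integrable_condExp.integrableOn) ?_
    (StronglyMeasurable.aestronglyMeasurable (stronglyMeasurable_condExp.mono hGs))).symm
  intro B hBGb _
  have hBm : MeasurableSet B := hGb B hBGb
  set bI := B.indicator (fun _ => (1:ℝ)) with hbI_def
  have hbI : Integrable bI μ := (integrable_const 1).indicator hBm
  set h := μ[bI | Gs] with hh_def
  have hhsm : StronglyMeasurable[Gs] h := stronglyMeasurable_condExp
  have hhm : Integrable h μ := integrable_condExp
  -- star: set-integral equality on F ⊔ Gs
  have hstar : ∀ T : Set X, MeasurableSet[F ⊔ Gs] T →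
      ∫ x in T, bI x ∂μ = ∫ x in T, h x ∂μ := by
    refine setIntegral_eq_on_generateFrom (m' := F ⊔ Gs) hsup (sup_eq_generateFrom_inter F Gs)
      (isPiSystem_inter_sets F Gs) hbI hhm ?_ ?_
    · rw [hh_def, integral_condExp hGsm]
    · rintro t ⟨C, hC, D, hD, rfl⟩
      have hCm : MeasurableSet C := hF C hC
      have hDm : MeasurableSet D := hGsm D hD
      have hL : ∫ x in C ∩ D, bI x ∂μ = (μ (C ∩ (D ∩ B))).toReal := by
        rw [hbI_def, setIntegral_indicator_one μ _ hBm, Set.inter_comm B (C ∩ D),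
          Set.inter_assoc]
      have hDh : ∫ x, D.indicator h x ∂μ = (μ (B ∩ D)).toReal := by
        rw [integral_indicator hDm, hh_def, setIntegral_condExp hGsm hbI hD, hbI_def,
          setIntegral_indicator_one μ _ hBm]
      have hR : ∫ x in C ∩ D, h x ∂μ = (μ C).toReal * (μ (B ∩ D)).toReal := by
        rw [← integral_indicator (hCm.inter hDm), indicator_inter_mul h C D,
          key C hC (D.indicator h) (hhm.indicator hDm) ((hhsm.indicator hD).mono hGs), hDh]
      rw [hL, hR, hind C (D ∩ B) hC ((hGs D hD).inter hBGb), ENNReal.toReal_mul,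
        Set.inter_comm D B]
  -- main computation
  have hMmeas : Integrable (fun x => (μ[f|Gs]) x * bI x) μ := by
    rw [mul_indicator_one]; exact integrable_condExp.indicator hBm
  have hSind : Integrable (fun x => h x * f x) μ := by
    rw [mul_indicator_one]; exact hhm.indicator hSm
  have e1 : ∫ x in B, (μ[f|Gs]) x ∂μ = ∫ x, (μ[f|Gs]) x * bI x ∂μ := by
    rw [← integral_indicator hBm, ← mul_indicator_one (μ[f|Gs]) B]
  have e2 : ∫ x, (μ[f|Gs]) x * bI x ∂μ = ∫ x, (μ[f|Gs]) x * h x ∂μ :=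
    pull (μ[f|Gs]) bI stronglyMeasurable_condExp hbI hMmeas
  have e3 : ∫ x, h x * f x ∂μ = ∫ x, h x * (μ[f|Gs]) x ∂μ :=
    pull h f hhsm hf hSind
  have e4 : ∫ x, h x * f x ∂μ = ∫ x in S, bI x ∂μ := by
    rw [hstar S hS, ← integral_indicator hSm, hf_def, mul_indicator_one h S]
  have e5 : ∫ x in B, f x ∂μ = (μ (S ∩ B)).toReal := by
    rw [hf_def, setIntegral_indicator_one μ _ hSm]
  have e6 : ∫ x in S, bI x ∂μ = (μ (S ∩ B)).toReal := by
    rw [hbI_def, setIntegral_indicator_one μ _ hBm, Set.inter_comm]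
  have e7 : ∫ x, (μ[f|Gs]) x * h x ∂μ = ∫ x, h x * (μ[f|Gs]) x ∂μ :=
    integral_congr_ae (Filter.Eventually.of_forall fun x => mul_comm _ _)
  rw [e1, e2, e7, ← e3, e4, e6, e5]

lemma ae_eq_const_of_levels {X : Type*} {m : MeasurableSpace X} (μ : Measure X)
    [IsProbabilityMeasure μ] {Y : X → ℝ} (hY : Measurable Y)
    (htriv : ∀ c : ℝ, μ {x | Y x ≤ c} = 0 ∨ μ {x | Y x ≤ c} = 1) :
    ∃ c₀ : ℝ, Y =ᵐ[μ] fun _ => c₀ := by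
  set T : Set ℝ := {c | μ {x | Y x ≤ c} = 1} with hT
  have hmono : ∀ c c' : ℝ, c ≤ c' → c ∈ T → c' ∈ T := by
    intro c c' hcc' hc
    rcases htriv c' with h0 | h1
    · exfalso
      have hsub : {x | Y x ≤ c} ⊆ {x | Y x ≤ c'} := fun x hx => le_trans hx hcc'
      have := measure_mono (μ := μ) hsub
      rw [hc, h0] at this
      exact absurd this (by simp)
    · exact h1
  have hne : T.Nonempty := by
    by_contra hemp
    have h0 : ∀ k : ℕ, μ {x | Y x ≤ (k : ℝ)} = 0 := by
      intro k
      rcases htriv (k : ℝ) with h | h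
      · exact h
      · exact (hemp ⟨(k:ℝ), h⟩).elim
    have huniv : (⋃ k : ℕ, {x | Y x ≤ (k : ℝ)}) = Set.univ := by
      ext x
      simp only [Set.mem_iUnion, Set.mem_univ, iff_true, Set.mem_setOf_eq]
      obtain ⟨k, hk⟩ := exists_nat_ge (Y x)
      exact ⟨k, hk⟩
    have := measure_iUnion_null_iff.2 h0
    rw [huniv] at this
    simp at this
  have hbdd : ∃ k : ℕ, μ {x | Y x ≤ -(k : ℝ)} = 0 := by
    by_contra hall
    push_neg at hall
    have h1 : ∀ k : ℕ, μ ({x | Y x ≤ -(k : ℝ)}ᶜ) = 0 := by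
      intro k
      rcases htriv (-(k:ℝ)) with h | h
      · exact absurd h (hall k)
      · exact (prob_compl_eq_zero_iff (hY measurableSet_Iic)).2 h
    have hud : (⋃ k : ℕ, ({x | Y x ≤ -(k : ℝ)}ᶜ)) = Set.univ := by
      ext x
      simp only [Set.mem_iUnion, Set.mem_univ, iff_true, Set.mem_compl_iff, Set.mem_setOf_eq]
      obtain ⟨k, hk⟩ := exists_nat_ge (-(Y x) + 1)
      exact ⟨k, by push_neg; linarith⟩
    have := measure_iUnion_null_iff.2 h1
    rw [hud] at this
    simp at this
  obtain ⟨k, hk0⟩ := hbdd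
  have hbddT : BddBelow T := by
    refine ⟨-(k:ℝ), fun c hc => ?_⟩
    by_contra hlt
    push_neg at hlt
    have hsub : {x | Y x ≤ c} ⊆ {x | Y x ≤ -(k:ℝ)} := fun x hx => le_trans hx hlt.le
    have := measure_mono (μ := μ) hsub
    rw [hc, hk0] at this
    exact absurd this (by simp)
  set c₀ := sInf T with hc₀def
  refine ⟨c₀, ?_⟩
  have h1 : μ {x | Y x ≤ c₀} = 1 := by
    have heq : {x | Y x ≤ c₀} = ⋂ j : ℕ, {x | Y x ≤ c₀ + 1/(j+1)} := by
      ext x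
      simp only [Set.mem_iInter, Set.mem_setOf_eq]
      constructor
      · intro h j
        have : (0:ℝ) < 1/(j+1) := by positivity
        linarith
      · intro h
        by_contra hlt
        push_neg at hlt
        obtain ⟨j, hj⟩ := exists_nat_one_div_lt (show (0:ℝ) < Y x - c₀ by linarith)
        have := h j
        linarith
    have hone : ∀ j : ℕ, μ {x | Y x ≤ c₀ + 1/(j+1)} = 1 := by
      intro j
      obtain ⟨t, htT, htlt⟩ := (Real.lt_sInf_add_pos hne (show (0:ℝ) < 1/(j+1) by positivity))
      exact hmono t _ (by rw [← hc₀def] at htlt; linarith) htT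
    have hcompl : μ ((⋂ j : ℕ, {x | Y x ≤ c₀ + 1/(j+1)})ᶜ) = 0 := by
      rw [Set.compl_iInter]
      refine measure_iUnion_null_iff.2 fun j => ?_
      exact (prob_compl_eq_zero_iff (hY measurableSet_Iic)).2 (hone j)
    rw [heq]
    have hmeas : MeasurableSet (⋂ j : ℕ, {x | Y x ≤ c₀ + 1/(j+1)}) :=
      MeasurableSet.iInter fun j => hY measurableSet_Iic
    rw [← prob_compl_eq_zero_iff hmeas]
    exact hcompl
  have h2 : μ {x | Y x < c₀} = 0 := by
    have heq : {x | Y x < c₀} = ⋃ j : ℕ, {x | Y x ≤ c₀ - 1/(j+1)} := by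
      ext x
      simp only [Set.mem_iUnion, Set.mem_setOf_eq]
      constructor
      · intro h
        obtain ⟨j, hj⟩ := exists_nat_one_div_lt (show (0:ℝ) < c₀ - Y x by linarith)
        exact ⟨j, by linarith⟩
      · rintro ⟨j, hj⟩
        have : (0:ℝ) < 1/(j+1) := by positivity
        linarith
    rw [heq]
    refine measure_iUnion_null_iff.2 fun j => ?_
    rcases htriv (c₀ - 1/(j+1)) with h | h
    · exact h
    · exfalso
      have : c₀ ≤ c₀ - 1/(j+1) := csInf_le hbddT h
      have hpos : (0:ℝ) < 1/(j+1) := by positivity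
      linarith
  have : μ {x | Y x ≠ c₀} = 0 := by
    have hsub : {x | Y x ≠ c₀} ⊆ {x | Y x < c₀} ∪ ({x | Y x ≤ c₀})ᶜ := by
      intro x hx
      rcases lt_or_gt_of_ne hx with h | h
      · exact Or.inl h
      · exact Or.inr (by simpa using h)
    refine measure_mono_null hsub ?_
    refine le_antisymm ?_ zero_le
    calc μ ({x | Y x < c₀} ∪ ({x | Y x ≤ c₀})ᶜ) ≤ μ {x | Y x < c₀} + μ (({x | Y x ≤ c₀})ᶜ) :=
          measure_union_le _ _
      _ = 0 := by
          rw [h2, show μ ({x | Y x ≤ c₀}ᶜ) = 0 from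
            (prob_compl_eq_zero_iff (hY measurableSet_Iic)).2 h1]
          simp
  filter_upwards [measure_eq_zero_iff_ae_notMem.1 this] with x hx
  simpa using hx

lemma fact1 {X : Type*} {F : MeasurableSpace X} {G : ℕ → MeasurableSpace X}
    {m : MeasurableSpace X} (μ : Measure X) [IsProbabilityMeasure μ]
    (hF : F ≤ m) (hG0 : G 0 ≤ m) (hGanti : Antitone G)
    (hGcomp : ∀ n, ∀ s : Set X, μ s = 0 → MeasurableSet[G n] s)
    (hindep : ProbabilityTheory.Indep F (G 0) μ)
    (hGtriv : ∀ A : Set X, MeasurableSet[⨅ n, G n] A → μ A = 0 ∨ μ A = 1)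
    {S : Set X} (hS : ∀ n, MeasurableSet[F ⊔ G n] S)
    {D : Set X} (hD : MeasurableSet[G 0] D) :
    μ (S ∩ D) = μ S * μ D := by
  have hGn : ∀ n, G n ≤ m := fun n => (hGanti (Nat.zero_le n)).trans hG0
  have hSm : MeasurableSet S := (sup_le hF (hGn 0)) S (hS 0)
  have hDm : MeasurableSet D := hG0 D hD
  set f := S.indicator (fun _ => (1:ℝ)) with hf_def
  have hf : Integrable f μ := (integrable_const 1).indicator hSm
  set Y := μ[f | G 0] with hY_def
  have hswap : ∀ n, Y =ᵐ[μ] μ[f | G n] := fun n =>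
    condexp_swap hF hG0 (hGanti (Nat.zero_le n)) hindep (hS n)
  have hYsm : StronglyMeasurable[G 0] Y := stronglyMeasurable_condExp
  have hYmeas : Measurable Y := (hYsm.mono hG0).measurable
  have hlevel : ∀ c : ℝ, MeasurableSet[⨅ n, G n] {x | Y x ≤ c} := by
    intro c
    rw [MeasurableSpace.measurableSet_iInf]
    intro n
    have hae := hswap n
    have hEnull : μ {x | ¬ Y x = (μ[f | G n]) x} = 0 := ae_iff.mp hae
    have hEG : MeasurableSet[G n] {x | ¬ Y x = (μ[f | G n]) x} := hGcomp n _ hEnull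
    have h2 : MeasurableSet[G n] ({x | Y x ≤ c} ∩ {x | ¬ Y x = (μ[f | G n]) x}) :=
      hGcomp n _ (measure_mono_null Set.inter_subset_right hEnull)
    have hgG : MeasurableSet[G n] {x | (μ[f | G n]) x ≤ c} :=
      (stronglyMeasurable_condExp (m := G n) (f := f) (μ := μ)).measurable
        (measurableSet_Iic (a := c))
    have hdecomp : {x | Y x ≤ c} =
        ({x | (μ[f | G n]) x ≤ c} \ {x | ¬ Y x = (μ[f | G n]) x}) ∪
        ({x | Y x ≤ c} ∩ {x | ¬ Y x = (μ[f | G n]) x}) := by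
      ext x
      by_cases hx : Y x = (μ[f | G n]) x
      · simp [Set.mem_setOf_eq, hx]
      · simp [Set.mem_setOf_eq, hx]
    rw [hdecomp]
    exact (hgG.diff hEG).union h2
  obtain ⟨c₀, hc₀eq⟩ := ae_eq_const_of_levels μ hYmeas (fun c => hGtriv _ (hlevel c))
  have hYint : ∫ x, Y x ∂μ = (μ S).toReal := by
    rw [hY_def, integral_condExp hG0, hf_def, integral_indicator hSm, setIntegral_const]
    simp [measureReal_def]
  have hc₀ : c₀ = (μ S).toReal := by
    have h := integral_congr_ae hc₀eq
    rw [hYint] at h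
    simpa using h.symm
  have h1 : ∫ x in D, f x ∂μ = (μ (S ∩ D)).toReal := by
    rw [hf_def, setIntegral_indicator_one μ _ hSm]
  have h2 : ∫ x in D, Y x ∂μ = ∫ x in D, f x ∂μ := setIntegral_condExp hG0 hf hD
  have h3 : ∫ x in D, Y x ∂μ = (μ S).toReal * (μ D).toReal := by
    rw [setIntegral_congr_ae hDm (hc₀eq.mono fun x hx _ => hx), setIntegral_const,
      smul_eq_mul, hc₀, mul_comm, measureReal_def]
  have hfinal : (μ (S ∩ D)).toReal = ((μ S) * (μ D)).toReal := by
    rw [ENNReal.toReal_mul, ← h1, ← h2, h3]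
  exact (ENNReal.toReal_eq_toReal_iff' (measure_ne_top μ _)
    (ENNReal.mul_ne_top (measure_ne_top μ _) (measure_ne_top μ _))).1 hfinal

open Set in
theorem statement7 {X : Type*} [m : MeasurableSpace X] (μ : Measure X)
    [IsProbabilityMeasure μ] (F G : ℕ → MeasurableSpace X)
    (hFle : ∀ n, F n ≤ m) (hGle : ∀ n, G n ≤ m)
    (hFanti : Antitone F) (hGanti : Antitone G)
    (hFcomp : ∀ n, ∀ s : Set X, μ s = 0 → MeasurableSet[F n] s)
    (hGcomp : ∀ n, ∀ s : Set X, μ s = 0 → MeasurableSet[G n] s)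
    (hindep : ProbabilityTheory.Indep (F 0) (G 0) μ)
    (hFtriv : ∀ A : Set X, MeasurableSet[⨅ n, F n] A → μ A = 0 ∨ μ A = 1)
    (hGtriv : ∀ A : Set X, MeasurableSet[⨅ n, G n] A → μ A = 0 ∨ μ A = 1) :
    ∀ A : Set X, MeasurableSet[⨅ n, F n ⊔ G n] A → μ A = 0 ∨ μ A = 1 := by
  intro A hA
  have hAn : ∀ n, MeasurableSet[F n ⊔ G n] A := MeasurableSpace.measurableSet_iInf.1 hA
  have hAm : MeasurableSet A := (sup_le (hFle 0) (hGle 0)) A (hAn 0)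
  have hprod : ∀ C, MeasurableSet[F 0] C → ∀ D, MeasurableSet[G 0] D →
      μ (A ∩ (C ∩ D)) = μ A * μ (C ∩ D) := by
    intro C hC D hD
    have hAC : ∀ n, MeasurableSet[F 0 ⊔ G n] (A ∩ C) := by
      intro n
      have h1 : MeasurableSet[F 0 ⊔ G n] A :=
        (sup_le_sup_right (hFanti (Nat.zero_le n)) (G n)) A (hAn n)
      exact h1.inter ((le_sup_left : F 0 ≤ F 0 ⊔ G n) C hC)
    have hstep1 : μ ((A ∩ C) ∩ D) = μ (A ∩ C) * μ D :=
      fact1 μ (hFle 0) (hGle 0) hGanti hGcomp hindep hGtriv hAC hD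
    have hA' : ∀ n, MeasurableSet[G 0 ⊔ F n] A := by
      intro n
      have hle : F n ⊔ G n ≤ G 0 ⊔ F n :=
        sup_le (le_sup_right : F n ≤ G 0 ⊔ F n)
          ((hGanti (Nat.zero_le n)).trans (le_sup_left : G 0 ≤ G 0 ⊔ F n))
      exact hle A (hAn n)
    have hstep2 : μ (A ∩ C) = μ A * μ C :=
      fact1 μ (hGle 0) (hFle 0) hFanti hFcomp hindep.symm hFtriv hA' hC
    have hCD : μ (C ∩ D) = μ C * μ D :=
      (ProbabilityTheory.Indep_iff _ _ _).1 hindep C D hC hD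
    rw [← Set.inter_assoc, hstep1, hstep2, hCD, mul_assoc]
  have hall : ∀ T : Set X, MeasurableSet[F 0 ⊔ G 0] T →
      ∫ x in T, A.indicator (fun _ => (1:ℝ)) x ∂μ = ∫ x in T, (fun _ => (μ A).toReal) x ∂μ := by
    refine setIntegral_eq_on_generateFrom (m' := F 0 ⊔ G 0) (sup_le (hFle 0) (hGle 0))
      (sup_eq_generateFrom_inter (F 0) (G 0)) (isPiSystem_inter_sets (F 0) (G 0))
      ((integrable_const 1).indicator hAm) (integrable_const _) ?_ ?_
    · rw [integral_indicator hAm, setIntegral_const, integral_const]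
      simp [measureReal_def]
    · rintro t ⟨C, hC, D, hD, rfl⟩
      rw [setIntegral_indicator_one μ _ hAm, setIntegral_const, smul_eq_mul,
        hprod C hC D hD, ENNReal.toReal_mul, mul_comm, measureReal_def]
  have hAA := hall A (hAn 0)
  rw [setIntegral_indicator_one μ _ hAm, Set.inter_self, setIntegral_const, smul_eq_mul] at hAA
  have hx : (μ A).toReal = (μ A).toReal * (μ A).toReal := hAA
  have h01 : (μ A).toReal = 0 ∨ (μ A).toReal = 1 := by
    have hz : (μ A).toReal * (1 - (μ A).toReal) = 0 := by nlinarith [hx]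
    rcases mul_eq_zero.mp hz with h | h
    · exact Or.inl h
    · right; linarith
  rcases h01 with h | h
  · exact Or.inl (((ENNReal.toReal_eq_zero_iff _).mp h).resolve_right (measure_ne_top μ _))
  · exact Or.inr ((ENNReal.toReal_eq_one_iff _).mp h)
end
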